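/- arXiv:1210.5325 — 5 statements merged into one kernel-verified Lean document; each statement's English description precedes it below -/
import Mathlib

section
/- Let G and H be additive commutative groups, ψ: G → H a surjective group homomorphism, R a G-graded commutative ring, and M a G-graded R-module. If the ψ-coarsening M_[ψ] is an injective object of GrMod^H(R_[ψ]), then M is an injective object of GrMod^G(R). -/
/-!
Common vocabulary: internally graded rings and modules, coarsening of gradings,
graded morphisms, and derived notions (injectivity, cogenerators, smallness, ...),
following Rohrer, "Coarsenings, injectives and Hom functors".
-/

open DirectSum

section Defs

variable {G H R : Type} [AddCommGroup G] [AddCommGroup H] [CommRing R]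

/-- The `ψ`-coarsening of a `G`-grading: `(ℳ_[ψ])_h = ⨁_{g ∈ ψ⁻¹(h)} ℳ_g`. -/
def coarsen {M : Type} [AddCommGroup M] (ψ : G →+ H) (ℳ : G → AddSubgroup M) (h : H) :
    AddSubgroup M :=
  ⨆ g ∈ ψ ⁻¹' {h}, ℳ g

/-- `(R, 𝒜)` is a `G`-graded commutative ring: the `𝒜 g` are additive subgroups whose
internal direct sum is `R`, and `𝒜 g * 𝒜 h ⊆ 𝒜 (g + h)`. -/
def IsGradedRing (𝒜 : G → AddSubgroup R) : Prop :=
  (1 : R) ∈ 𝒜 0 ∧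
  (∀ {g h : G} {a b : R}, a ∈ 𝒜 g → b ∈ 𝒜 h → a * b ∈ 𝒜 (g + h)) ∧
  (letI := Classical.decEq G; DirectSum.IsInternal 𝒜)

/-- `(M, ℳ)` is a `G`-graded module over the `G`-graded ring `(R, 𝒜)`. -/
def IsGradedModule {M : Type} [AddCommGroup M] [Module R M]
    (𝒜 : G → AddSubgroup R) (ℳ : G → AddSubgroup M) : Prop :=
  (∀ {g h : G} {r : R} {m : M}, r ∈ 𝒜 g → m ∈ ℳ h → r • m ∈ ℳ (g + h)) ∧
  (letI := Classical.decEq G; DirectSum.IsInternal ℳ)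

/-- A morphism of `G`-graded `R`-modules is an `R`-linear map respecting the gradings. -/
def IsGradedHom {M N : Type} [AddCommGroup M] [Module R M]
    [AddCommGroup N] [Module R N] (ℳ : G → AddSubgroup M) (𝒩 : G → AddSubgroup N)
    (f : M →ₗ[R] N) : Prop :=
  ∀ g : G, ∀ m ∈ ℳ g, f m ∈ 𝒩 g

/-- The grading of a direct sum of graded modules:
`(⨁_i N_i)_g` consists of the elements all of whose components lie in degree `g`. -/
def directSumGrading {ι : Type} {M : ι → Type}
    [∀ i, AddCommGroup (M i)] (ℳ : ∀ i, G → AddSubgroup (M i)) (g : G) :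
    AddSubgroup (⨁ i, M i) where
  carrier := {x | ∀ i, x i ∈ ℳ i g}
  zero_mem' := fun i => by simp only [DirectSum.zero_apply, ZeroMemClass.zero_mem]
  add_mem' := fun {x y} hx hy i => by
    rw [DirectSum.add_apply]; exact add_mem (hx i) (hy i)
  neg_mem' := fun {x} hx i => by
    rw [DFinsupp.neg_apply]; exact neg_mem (hx i)

/-- `(E, ℰ)` is an injective object of the category of `G`-graded `R`-modules:
every graded morphism into `E` extends along every injective graded morphism. -/
def IsInjectiveGradedModule (𝒜 : G → AddSubgroup R) {E : Type} [AddCommGroup E] [Module R E]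
    (ℰ : G → AddSubgroup E) : Prop :=
  ∀ (A B : Type) [AddCommGroup A] [Module R A] [AddCommGroup B] [Module R B],
    ∀ (𝒮A : G → AddSubgroup A) (𝒮B : G → AddSubgroup B),
      IsGradedModule 𝒜 𝒮A → IsGradedModule 𝒜 𝒮B →
      ∀ i : A →ₗ[R] B, Function.Injective i → IsGradedHom 𝒮A 𝒮B i →
      ∀ f : A →ₗ[R] E, IsGradedHom 𝒮A ℰ f →
      ∃ g : B →ₗ[R] E, IsGradedHom 𝒮B ℰ g ∧ g ∘ₗ i = f

/-- `(M, ℳ)` is a cogenerator of the category of `G`-graded `R`-modules: every nonzero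
graded morphism is detected by a graded morphism into `M`. -/
def IsCogenerator (𝒜 : G → AddSubgroup R) {M : Type} [AddCommGroup M] [Module R M]
    (ℳ : G → AddSubgroup M) : Prop :=
  ∀ (N N' : Type) [AddCommGroup N] [Module R N] [AddCommGroup N'] [Module R N'],
    ∀ (𝒩 : G → AddSubgroup N) (𝒩' : G → AddSubgroup N'),
      IsGradedModule 𝒜 𝒩 → IsGradedModule 𝒜 𝒩' →
      ∀ u : N →ₗ[R] N', IsGradedHom 𝒩 𝒩' u → u ≠ 0 →
      ∃ v : N' →ₗ[R] M, IsGradedHom 𝒩' ℳ v ∧ v ∘ₗ u ≠ 0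

/-- `M` is a small graded module: every graded morphism from `M` into a direct sum of
graded modules factors through a finite sub-sum. -/
def IsSmall (𝒜 : G → AddSubgroup R) {M : Type} [AddCommGroup M] [Module R M]
    (ℳ : G → AddSubgroup M) : Prop :=
  ∀ (ι : Type) (N : ι → Type) [∀ i, AddCommGroup (N i)] [∀ i, Module R (N i)],
    ∀ (𝒩 : ∀ i, G → AddSubgroup (N i)), (∀ i, IsGradedModule 𝒜 (𝒩 i)) →
      ∀ f : M →ₗ[R] ⨁ i, N i, IsGradedHom ℳ (directSumGrading 𝒩) f →
        ∃ s : Finset ι, ∀ (m : M) (i : ι), i ∉ s → f m i = 0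

/-- `M` is `P`-small: every graded morphism from `M` into a direct sum of copies of `P`
factors through a finite sub-sum. -/
def IsSmallWrt {P : Type} [AddCommGroup P] [Module R P] (𝒬 : G → AddSubgroup P)
    {M : Type} [AddCommGroup M] [Module R M] (ℳ : G → AddSubgroup M) : Prop :=
  ∀ (ι : Type) (f : M →ₗ[R] ⨁ (_ : ι), P),
    IsGradedHom ℳ (directSumGrading fun (_ : ι) => 𝒬) f →
      ∃ s : Finset ι, ∀ (m : M) (i : ι), i ∉ s → f m i = 0

/-- A `G`-graded ring is steady if all small graded modules over it are finitely generated. -/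
def IsSteady (𝒜 : G → AddSubgroup R) : Prop :=
  ∀ (M : Type) [AddCommGroup M] [Module R M], ∀ ℳ : G → AddSubgroup M,
    IsGradedModule 𝒜 ℳ → IsSmall 𝒜 ℳ → Module.Finite R M

/-- A graded ideal of the `G`-graded ring `(R, 𝒜)`: `I = ⨁_g (I ∩ R_g)`. -/
def IsGradedIdeal (𝒜 : G → AddSubgroup R) (I : Ideal R) : Prop :=
  I.toAddSubgroup = ⨆ g : G, I.toAddSubgroup ⊓ 𝒜 g

/-- A simple `G`-graded `R`-module: nonzero, and its only graded submodules are `0` and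
the whole module. -/
def IsSimpleGradedModule (𝒜 : G → AddSubgroup R) {S : Type} [AddCommGroup S] [Module R S]
    (𝒮 : G → AddSubgroup S) : Prop :=
  IsGradedModule 𝒜 𝒮 ∧ Nontrivial S ∧
    ∀ P : Submodule R S, (P.toAddSubgroup = ⨆ g : G, P.toAddSubgroup ⊓ 𝒮 g) →
      P = ⊥ ∨ P = ⊤

/-- The subgroup of `M →ₗ[R] N` consisting of the graded morphisms `M → N(g)`, i.e. the
degree-`g` component of the graded Hom module `⨁HOM(M, N)`. -/
def gradedHomSubgroup {M N : Type} [AddCommGroup M] [Module R M] [AddCommGroup N] [Module R N]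
    (ℳ : G → AddSubgroup M) (𝒩 : G → AddSubgroup N) (g : G) : AddSubgroup (M →ₗ[R] N) where
  carrier := {u | ∀ g' : G, ∀ m ∈ ℳ g', u m ∈ 𝒩 (g + g')}
  zero_mem' := fun g' m _ => by simp only [LinearMap.zero_apply, ZeroMemClass.zero_mem]
  add_mem' := fun {u v} hu hv g' m hm => by
    rw [LinearMap.add_apply]; exact add_mem (hu g' m hm) (hv g' m hm)
  neg_mem' := fun {u} hu g' m hm => by
    rw [LinearMap.neg_apply]; exact neg_mem (hu g' m hm)

end Defs

set_option synthInstance.maxHeartbeats 1000000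
set_option maxHeartbeats 1000000

section Aux

variable {G H : Type} [AddCommGroup G] [AddCommGroup H]

lemma internal_iSup_eq_top' {ι N : Type} [DecidableEq ι] [AddCommGroup N]
    {𝒩 : ι → AddSubgroup N} (h : DirectSum.IsInternal 𝒩) : ⨆ i, 𝒩 i = ⊤ := by
  rw [eq_top_iff]
  rintro n -
  obtain ⟨x, rfl⟩ := h.2 n
  induction x using DirectSum.induction_on with
  | zero => simpa using zero_mem _
  | of i y =>
    rw [DirectSum.coeAddMonoidHom_of]
    exact AddSubgroup.mem_iSup_of_mem i y.2
  | add x y hx hy =>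
    rw [map_add]; exact add_mem hx hy

/-- The decomposition equivalence attached to an internal direct sum. -/
noncomputable def decompOf {ι N : Type} [DecidableEq ι] [AddCommGroup N]
    (𝒩 : ι → AddSubgroup N) (h : Function.Bijective (DirectSum.coeAddMonoidHom 𝒩)) :
    N ≃+ ⨁ i, 𝒩 i :=
  (AddEquiv.ofBijective (DirectSum.coeAddMonoidHom 𝒩) h).symm

lemma decompOf_of_mem {ι N : Type} [DecidableEq ι] [AddCommGroup N]
    {𝒩 : ι → AddSubgroup N} (h : Function.Bijective (DirectSum.coeAddMonoidHom 𝒩))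
    {i : ι} {n : N} (hn : n ∈ 𝒩 i) :
    decompOf 𝒩 h n = DirectSum.of (fun i => 𝒩 i) i ⟨n, hn⟩ := by
  rw [decompOf, AddEquiv.symm_apply_eq, AddEquiv.ofBijective_apply,
    DirectSum.coeAddMonoidHom_of]

/-- The additive projection onto the `i`-th component of a decomposition. -/
noncomputable def projHom {ι N : Type} [AddCommGroup N]
    (𝒩 : ι → AddSubgroup N) (dN : N ≃+ ⨁ i, 𝒩 i) (i : ι) : N →+ N where
  toFun n := (dN n i : N)
  map_zero' := by
    show ((dN 0) i : N) = 0
    rw [map_zero]; rfl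
  map_add' a b := by
    show ((dN (a + b)) i : N) = ((dN a) i : N) + ((dN b) i : N)
    rw [map_add, DirectSum.add_apply, AddSubgroup.coe_add]

lemma projHom_mem {ι N : Type} [AddCommGroup N]
    (𝒩 : ι → AddSubgroup N) (dN : N ≃+ ⨁ i, 𝒩 i) (i : ι) (n : N) :
    projHom 𝒩 dN i n ∈ 𝒩 i := (dN n i).2

lemma projHom_of_mem {ι N : Type} [DecidableEq ι] [AddCommGroup N]
    {𝒩 : ι → AddSubgroup N} (h : Function.Bijective (DirectSum.coeAddMonoidHom 𝒩))
    {i : ι} {n : N} (hn : n ∈ 𝒩 i) :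
    projHom 𝒩 (decompOf 𝒩 h) i n = n := by
  show ((decompOf 𝒩 h n) i : N) = n
  rw [decompOf_of_mem h hn, DirectSum.of_eq_same]

lemma projHom_of_mem_ne {ι N : Type} [DecidableEq ι] [AddCommGroup N]
    {𝒩 : ι → AddSubgroup N} (h : Function.Bijective (DirectSum.coeAddMonoidHom 𝒩))
    {i j : ι} (hij : j ≠ i) {n : N} (hn : n ∈ 𝒩 j) :
    projHom 𝒩 (decompOf 𝒩 h) i n = 0 := by
  show ((decompOf 𝒩 h n) i : N) = 0
  rw [decompOf_of_mem h hn, DirectSum.of_eq_of_ne _ _ _ hij.symm]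
  rfl

lemma coarsen_eq (ψ : G →+ H) {N : Type} [AddCommGroup N] (𝒩 : G → AddSubgroup N) (hh : H) :
    coarsen ψ 𝒩 hh = ⨆ x : (ψ ⁻¹' {hh} : Set G), 𝒩 x :=
  (iSup_subtype'' _ _).symm

lemma le_coarsen (ψ : G →+ H) {N : Type} [AddCommGroup N] (𝒩 : G → AddSubgroup N) (g : G) :
    𝒩 g ≤ coarsen ψ 𝒩 (ψ g) := by
  rw [coarsen_eq]
  exact le_iSup (fun x : (ψ ⁻¹' {ψ g} : Set G) => 𝒩 x) ⟨g, rfl⟩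

/-- Coarsening preserves internality. -/
lemma coarsen_internal [DecidableEq G] [DecidableEq H] (ψ : G →+ H) {N : Type} [AddCommGroup N]
    (𝒩 : G → AddSubgroup N) (h : DirectSum.IsInternal 𝒩) :
    DirectSum.IsInternal (coarsen ψ 𝒩) := by
  set C := DirectSum.coeAddMonoidHom (coarsen ψ 𝒩) with hC
  set φ : N →+ ⨁ h', coarsen ψ 𝒩 h' :=
    (DirectSum.toAddMonoid fun g =>
      (DirectSum.of (fun h' => coarsen ψ 𝒩 h') (ψ g)).comp
        (AddSubgroup.inclusion (le_coarsen ψ 𝒩 g))).comp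
      (decompOf 𝒩 h).toAddMonoidHom with hφdef
  have hφ : ∀ {g : G} {n : N} (hn : n ∈ 𝒩 g),
      φ n = DirectSum.of (fun h' => coarsen ψ 𝒩 h') (ψ g) ⟨n, le_coarsen ψ 𝒩 g hn⟩ := by
    intro g n hn
    show DirectSum.toAddMonoid _ (decompOf 𝒩 h n) = _
    rw [decompOf_of_mem h hn, DirectSum.toAddMonoid_of]
    rfl
  have key : ∀ (hh : H) (y : N), y ∈ coarsen ψ 𝒩 hh →
      ∃ hy : y ∈ coarsen ψ 𝒩 hh,
        φ y = DirectSum.of (fun h' => coarsen ψ 𝒩 h') hh ⟨y, hy⟩ := by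
    intro hh y hy
    rw [coarsen_eq] at hy
    refine AddSubgroup.iSup_induction (x := y)
      (C := fun y => ∃ hy : y ∈ coarsen ψ 𝒩 hh,
        φ y = DirectSum.of (fun h' => coarsen ψ 𝒩 h') hh ⟨y, hy⟩) _ hy ?_ ?_ ?_
    · rintro ⟨g, hg⟩ x hx
      simp only [Set.mem_preimage, Set.mem_singleton_iff] at hg
      subst hg
      exact ⟨le_coarsen ψ 𝒩 g hx, hφ hx⟩
    · refine ⟨zero_mem _, ?_⟩
      have : (⟨(0 : N), zero_mem _⟩ : coarsen ψ 𝒩 hh) = 0 := rfl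
      rw [this, map_zero, map_zero]
    · rintro x y ⟨hx, ihx⟩ ⟨hy2, ihy⟩
      refine ⟨add_mem hx hy2, ?_⟩
      rw [map_add, ihx, ihy, ← map_add]
      rfl
  have key' : ∀ (hh : H) (x : coarsen ψ 𝒩 hh),
      φ (x : N) = DirectSum.of (fun h' => coarsen ψ 𝒩 h') hh x := by
    intro hh x
    obtain ⟨hy, hxy⟩ := key hh (x : N) x.2
    rw [hxy]
  have linv : ∀ x : ⨁ h', coarsen ψ 𝒩 h', φ (C x) = x := by
    intro x
    have : φ.comp C = AddMonoidHom.id _ := by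
      refine DirectSum.addHom_ext fun hh y => ?_
      simp only [AddMonoidHom.comp_apply, AddMonoidHom.id_apply, hC,
        DirectSum.coeAddMonoidHom_of]
      exact key' hh y
    exact DFunLike.congr_fun this x
  have rinv : ∀ n : N, C (φ n) = n := by
    intro n
    have hn : n ∈ ⨆ g, 𝒩 g := by
      rw [internal_iSup_eq_top' h]; trivial
    refine AddSubgroup.iSup_induction (x := n) (C := fun n => C (φ n) = n) _ hn ?_ ?_ ?_
    · intro g x hx
      show C (φ x) = x
      rw [hφ hx, hC, DirectSum.coeAddMonoidHom_of]
    · show C (φ 0) = 0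
      rw [map_zero, map_zero]
    · intro x y ihx ihy
      show C (φ (x + y)) = x + y
      rw [map_add, map_add, ihx, ihy]
  exact ⟨Function.LeftInverse.injective linv, fun n => ⟨φ n, rinv n⟩⟩

/-- Coarsening preserves compatibility of scalar multiplication with the gradings. -/
lemma coarsen_smul {R N : Type} [CommRing R] [AddCommGroup N] [Module R N] (ψ : G →+ H)
    (𝒜 : G → AddSubgroup R) (𝒩 : G → AddSubgroup N)
    (hsm : ∀ {g h : G} {r : R} {n : N}, r ∈ 𝒜 g → n ∈ 𝒩 h → r • n ∈ 𝒩 (g + h))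
    {h h' : H} {r : R} {n : N} (hr : r ∈ coarsen ψ 𝒜 h) (hn : n ∈ coarsen ψ 𝒩 h') :
    r • n ∈ coarsen ψ 𝒩 (h + h') := by
  rw [coarsen_eq] at hr
  refine AddSubgroup.iSup_induction (x := r)
    (C := fun r => ∀ n, n ∈ coarsen ψ 𝒩 h' → r • n ∈ coarsen ψ 𝒩 (h + h')) _ hr ?_ ?_ ?_ n hn
  · rintro ⟨g, hg⟩ x hx m hm
    simp only [Set.mem_preimage, Set.mem_singleton_iff] at hg
    rw [coarsen_eq] at hm
    refine AddSubgroup.iSup_induction (x := m)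
      (C := fun m => x • m ∈ coarsen ψ 𝒩 (h + h')) _ hm ?_ ?_ ?_
    · rintro ⟨g', hg'⟩ y hy
      simp only [Set.mem_preimage, Set.mem_singleton_iff] at hg'
      have : x • y ∈ 𝒩 (g + g') := hsm hx hy
      have h2 := le_coarsen ψ 𝒩 (g + g') this
      rwa [map_add, hg, hg'] at h2
    · show x • (0 : N) ∈ coarsen ψ 𝒩 (h + h')
      rw [smul_zero]; exact zero_mem _
    · intro a b iha ihb
      show x • (a + b) ∈ coarsen ψ 𝒩 (h + h')
      rw [smul_add]; exact add_mem iha ihb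
  · intro m _
    show (0 : R) • m ∈ coarsen ψ 𝒩 (h + h')
    rw [zero_smul]; exact zero_mem _
  · intro a b iha ihb m hm
    show (a + b) • m ∈ coarsen ψ 𝒩 (h + h')
    rw [add_smul]; exact add_mem (iha m hm) (ihb m hm)

end Aux


/-- **Statement 5** (Proposition 1.78): if the `ψ`-coarsening `M_[ψ]` is an injective
`H`-graded `R_[ψ]`-module, then `M` is an injective `G`-graded `R`-module. -/
theorem injective_of_coarsening_injective
    {G H R M : Type} [AddCommGroup G] [AddCommGroup H] [CommRing R]
    [AddCommGroup M] [Module R M]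
    (ψ : G →+ H) (hψ : Function.Surjective ψ)
    (𝒜 : G → AddSubgroup R) (h𝒜 : IsGradedRing 𝒜)
    (ℳ : G → AddSubgroup M) (hℳ : IsGradedModule 𝒜 ℳ)
    (hinj : IsInjectiveGradedModule (coarsen ψ 𝒜) (coarsen ψ ℳ)) :
    IsInjectiveGradedModule 𝒜 ℳ := by
  letI := Classical.decEq G
  letI := Classical.decEq H
  intro A B _ _ _ _ 𝒮A 𝒮B hA hB i hi_inj hi_gr f hf
  -- internality hypotheses
  have hAint : DirectSum.IsInternal 𝒮A := hA.2
  have hBint : DirectSum.IsInternal 𝒮B := hB.2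
  have hMint : DirectSum.IsInternal ℳ := hℳ.2
  have hRint : DirectSum.IsInternal 𝒜 := h𝒜.2.2
  have topA : ⨆ g, 𝒮A g = ⊤ := internal_iSup_eq_top' hAint
  have topB : ⨆ g, 𝒮B g = ⊤ := internal_iSup_eq_top' hBint
  have topR : ⨆ g, 𝒜 g = ⊤ := internal_iSup_eq_top' hRint
  have topM : ⨆ g, ℳ g = ⊤ := internal_iSup_eq_top' hMint
  -- the coarsened data
  have hA' : IsGradedModule (coarsen ψ 𝒜) (coarsen ψ 𝒮A) :=
    ⟨fun hr hn => coarsen_smul ψ 𝒜 𝒮A (fun ha hb => hA.1 ha hb) hr hn,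
      coarsen_internal ψ 𝒮A hAint⟩
  have hB' : IsGradedModule (coarsen ψ 𝒜) (coarsen ψ 𝒮B) :=
    ⟨fun hr hn => coarsen_smul ψ 𝒜 𝒮B (fun ha hb => hB.1 ha hb) hr hn,
      coarsen_internal ψ 𝒮B hBint⟩
  have hcoarse_hom : ∀ {A' B' : Type} [AddCommGroup A'] [AddCommGroup B'],
      ∀ [Module R A'] [Module R B'],
      ∀ (𝒮 : G → AddSubgroup A') (𝒯 : G → AddSubgroup B') (u : A' →ₗ[R] B'),
        IsGradedHom 𝒮 𝒯 u → IsGradedHom (coarsen ψ 𝒮) (coarsen ψ 𝒯) u := by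
    intro A' B' _ _ _ _ 𝒮 𝒯 u hu hh m hm
    rw [coarsen_eq] at hm
    refine AddSubgroup.iSup_induction (x := m)
      (C := fun m => u m ∈ coarsen ψ 𝒯 hh) _ hm ?_ ?_ ?_
    · rintro ⟨g, hg⟩ x hx
      simp only [Set.mem_preimage, Set.mem_singleton_iff] at hg
      show u x ∈ coarsen ψ 𝒯 hh
      rw [← hg]
      exact le_coarsen ψ 𝒯 g (hu g x hx)
    · show u 0 ∈ coarsen ψ 𝒯 hh
      rw [map_zero]; exact zero_mem _
    · intro x y ihx ihy
      show u (x + y) ∈ coarsen ψ 𝒯 hh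
      rw [map_add]; exact add_mem ihx ihy
  obtain ⟨g, -, hgi⟩ := hinj A B (coarsen ψ 𝒮A) (coarsen ψ 𝒮B) hA' hB' i hi_inj
    (hcoarse_hom 𝒮A 𝒮B i hi_gr) f (hcoarse_hom 𝒮A ℳ f hf)
  -- decompositions
  set dM := decompOf ℳ hMint with hdM
  set dB := decompOf 𝒮B hBint with hdB
  -- the degree-zero graded part of `g`
  set g₀ : B →+ M :=
    (DirectSum.toAddMonoid fun γ =>
      (projHom ℳ dM γ).comp (g.toAddMonoidHom.comp (𝒮B γ).subtype)).comp
      dB.toAddMonoidHom with hg₀def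
  have hg₀ : ∀ (γ : G), ∀ b ∈ 𝒮B γ, g₀ b = projHom ℳ dM γ (g b) := by
    intro γ b hb
    show DirectSum.toAddMonoid _ (dB b) = _
    rw [hdB, decompOf_of_mem hBint hb, DirectSum.toAddMonoid_of]
    rfl
  -- the key projection identity
  have hproj : ∀ (δ γ : G) (r : R), r ∈ 𝒜 δ → ∀ m : M,
      projHom ℳ dM (δ + γ) (r • m) = r • projHom ℳ dM γ m := by
    intro δ γ r hr m
    have hm : m ∈ ⨆ g', ℳ g' := by rw [topM]; trivial
    refine AddSubgroup.iSup_induction (x := m)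
      (C := fun m => projHom ℳ dM (δ + γ) (r • m) = r • projHom ℳ dM γ m) _ hm ?_ ?_ ?_
    · intro g' x hx
      show projHom ℳ dM (δ + γ) (r • x) = r • projHom ℳ dM γ x
      by_cases hgg : g' = γ
      · subst hgg
        rw [hdM, projHom_of_mem hMint (hℳ.1 hr hx), projHom_of_mem hMint hx]
      · have h1 : r • x ∈ ℳ (δ + g') := hℳ.1 hr hx
        rw [hdM, projHom_of_mem_ne hMint (fun hc => hgg (by
          have := add_left_cancel hc; exact this)) h1,
          projHom_of_mem_ne hMint hgg hx, smul_zero]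
    · show projHom ℳ dM (δ + γ) (r • (0 : M)) = r • projHom ℳ dM γ 0
      rw [smul_zero, map_zero, map_zero, smul_zero]
    · intro x y ihx ihy
      show projHom ℳ dM (δ + γ) (r • (x + y)) = r • projHom ℳ dM γ (x + y)
      rw [smul_add, map_add, map_add, smul_add, ihx, ihy]
  -- `g₀` is `R`-linear
  have hsmul : ∀ (r : R) (b : B), g₀ (r • b) = r • g₀ b := by
    have main : ∀ r ∈ ⨆ g', 𝒜 g', ∀ b : B, g₀ (r • b) = r • g₀ b := by
      intro r hr
      refine AddSubgroup.iSup_induction (x := r)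
        (C := fun r => ∀ b : B, g₀ (r • b) = r • g₀ b) _ hr ?_ ?_ ?_
      · intro δ x hx b
        have hb : b ∈ ⨆ γ, 𝒮B γ := by rw [topB]; trivial
        refine AddSubgroup.iSup_induction (x := b)
          (C := fun b => g₀ (x • b) = x • g₀ b) _ hb ?_ ?_ ?_
        · intro γ b' hb'
          show g₀ (x • b') = x • g₀ b'
          have h1 : x • b' ∈ 𝒮B (δ + γ) := hB.1 hx hb'
          rw [hg₀ (δ + γ) _ h1, hg₀ γ _ hb', map_smul, hproj δ γ x hx]
        · show g₀ (x • (0 : B)) = x • g₀ 0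
          rw [smul_zero, map_zero, smul_zero]
        · intro b1 b2 ih1 ih2
          show g₀ (x • (b1 + b2)) = x • g₀ (b1 + b2)
          rw [smul_add, map_add, ih1, ih2, map_add, smul_add]
      · intro b
        show g₀ ((0 : R) • b) = (0 : R) • g₀ b
        rw [zero_smul, map_zero, zero_smul]
      · intro r1 r2 ih1 ih2 b
        show g₀ ((r1 + r2) • b) = (r1 + r2) • g₀ b
        rw [add_smul, map_add, ih1, ih2, add_smul]
    intro r b
    exact main r (by rw [topR]; trivial) b
  -- assemble the graded extension
  refine ⟨{ toFun := g₀, map_add' := map_add g₀, map_smul' := hsmul }, ?_, ?_⟩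
  · intro γ b hb
    show g₀ b ∈ ℳ γ
    rw [hg₀ γ b hb]
    exact projHom_mem ℳ dM γ (g b)
  · apply LinearMap.ext
    intro a
    show g₀ (i a) = f a
    have ha : a ∈ ⨆ γ, 𝒮A γ := by rw [topA]; trivial
    refine AddSubgroup.iSup_induction (x := a)
      (C := fun a => g₀ (i a) = f a) _ ha ?_ ?_ ?_
    · intro γ a' ha'
      show g₀ (i a') = f a'
      have h1 : i a' ∈ 𝒮B γ := hi_gr γ a' ha'
      have h2 : g (i a') = f a' := DFunLike.congr_fun hgi a'
      rw [hg₀ γ _ h1, h2, hdM, projHom_of_mem hMint (hf γ a' ha')]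
    · show g₀ (i 0) = f 0
      rw [map_zero, map_zero, map_zero]
    · intro a1 a2 ih1 ih2
      show g₀ (i (a1 + a2)) = f (a1 + a2)
      rw [map_add, map_add, ih1, ih2, map_add]
end

section
/- Let G and H be additive commutative groups, ψ: G → H a surjective group homomorphism, and R a G-graded commutative ring. If the ψ-coarsening R_[ψ] is steady (every small H-graded R_[ψ]-module is finitely generated), then R is steady (every small G-graded R-module is finitely generated). -/
/-!
Common vocabulary: internally graded rings and modules, coarsening of gradings,
graded morphisms, and derived notions (injectivity, cogenerators, smallness, ...),
following Rohrer, "Coarsenings, injectives and Hom functors".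
-/

open DirectSum

section Helpers

set_option synthInstance.maxHeartbeats 1000000
set_option maxHeartbeats 2000000

open DirectSum

variable {G H R : Type} [AddCommGroup G] [AddCommGroup H] [CommRing R]

lemma coarsen_le {M : Type} [AddCommGroup M] (ψ : G →+ H) (ℳ : G → AddSubgroup M) (g : G) :
    ℳ g ≤ coarsen ψ ℳ (ψ g) :=
  le_iSup₂ (f := fun g' (_ : g' ∈ ψ ⁻¹' {ψ g}) => ℳ g') g rfl

lemma coarsen_induction {M : Type} [AddCommGroup M] (ψ : G →+ H) (ℳ : G → AddSubgroup M)
    {h₀ : H} {p : M → Prop} {m : M} (hm : m ∈ coarsen ψ ℳ h₀)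
    (mem : ∀ g, ψ g = h₀ → ∀ x ∈ ℳ g, p x) (zero : p 0)
    (add : ∀ x y, p x → p y → p (x + y)) : p m := by
  rw [coarsen, ← iSup_subtype''] at hm
  exact AddSubgroup.iSup_induction (C := p) _ hm (fun g x hx => mem g.1 g.2 x hx) zero add

section Internal

variable {M : Type} [AddCommGroup M] [DecidableEq G] [DecidableEq H]
variable {ℳ : G → AddSubgroup M}

/-- The additive equivalence `⨁ g, ℳ g ≃+ M` arising from internality. -/
noncomputable def internalEquiv (hint : DirectSum.IsInternal ℳ) : (⨁ g, ↥(ℳ g)) ≃+ M :=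
  AddEquiv.ofBijective (DirectSum.coeAddMonoidHom ℳ) hint

lemma internalEquiv_apply (hint : DirectSum.IsInternal ℳ) (x : ⨁ g, ↥(ℳ g)) :
    internalEquiv hint x = DirectSum.coeAddMonoidHom ℳ x := rfl

lemma internalEquiv_symm_of_mem (hint : DirectSum.IsInternal ℳ) {g : G} {m : M}
    (hm : m ∈ ℳ g) :
    (internalEquiv hint).symm m = DirectSum.of (fun g => ↥(ℳ g)) g ⟨m, hm⟩ := by
  apply (internalEquiv hint).injective
  rw [AddEquiv.apply_symm_apply, internalEquiv_apply, DirectSum.coeAddMonoidHom_of]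

lemma internal_induction (hint : DirectSum.IsInternal ℳ) {p : M → Prop}
    (zero : p 0) (mem : ∀ g, ∀ m ∈ ℳ g, p m)
    (add : ∀ x y, p x → p y → p (x + y)) : ∀ m, p m := by
  intro m
  obtain ⟨x, rfl⟩ := hint.2 m
  induction x using DirectSum.induction_on with
  | zero => simpa using zero
  | of g y => rw [DirectSum.coeAddMonoidHom_of]; exact mem g y y.2
  | add x y hx hy => rw [map_add]; exact add _ _ hx hy

lemma symm_apply_coarsen_eq_zero (hint : DirectSum.IsInternal ℳ) (ψ : G →+ H)
    {h₀ : H} {m : M} (hm : m ∈ coarsen ψ ℳ h₀) {g : G} (hg : ψ g ≠ h₀) :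
    ((internalEquiv hint).symm m) g = 0 := by
  refine coarsen_induction ψ ℳ (p := fun x => ((internalEquiv hint).symm x) g = 0) hm
    (fun g' hg' x hx => ?_) (by simp) (fun x y hx hy => ?_)
  · show ((internalEquiv hint).symm x) g = 0
    rw [internalEquiv_symm_of_mem hint hx]
    refine DirectSum.of_eq_of_ne _ _ _ (fun hgg' => ?_)
    exact hg (hgg' ▸ hg')
  · show ((internalEquiv hint).symm (x + y)) g = 0
    rw [map_add, DirectSum.add_apply, hx, hy, add_zero]

lemma isInternal_coarsen (ψ : G →+ H) (hint : DirectSum.IsInternal ℳ) :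
    DirectSum.IsInternal (coarsen ψ ℳ) := by
  set e := internalEquiv hint with he
  have key : ∀ (x : ⨁ h, ↥(coarsen ψ ℳ h)) (g : G),
      (e.symm (DirectSum.coeAddMonoidHom _ x)) g = (e.symm ((x (ψ g) : M))) g := by
    intro x g
    induction x using DirectSum.induction_on with
    | zero => simp
    | of h m =>
      rw [DirectSum.coeAddMonoidHom_of]
      by_cases hgh : ψ g = h
      · subst hgh; rw [DirectSum.of_eq_same]
      · rw [DirectSum.of_eq_of_ne _ _ _ (fun hh => hgh hh)]
        rw [symm_apply_coarsen_eq_zero hint ψ m.2 hgh]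
        simp
    | add x y hx hy =>
      rw [map_add, map_add, DirectSum.add_apply, DirectSum.add_apply, hx, hy,
        AddSubgroup.coe_add, map_add, DirectSum.add_apply]
  constructor
  · rw [injective_iff_map_eq_zero]
    intro x hx
    have hz : ∀ g : G, (e.symm ((x (ψ g) : M))) g = 0 := by
      intro g; rw [← key x g, hx]; simp
    have hzero : ∀ h : H, x h = 0 := by
      intro h
      have : e.symm ((x h : M)) = 0 := by
        refine DFunLike.ext _ _ fun g => ?_
        by_cases hgh : ψ g = h
        · rw [← hgh] at *; rw [hz g, DirectSum.zero_apply]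
        · rw [symm_apply_coarsen_eq_zero hint ψ (x h).2 hgh, DirectSum.zero_apply]
      have : ((x h : M)) = 0 := by
        have := congrArg e this
        simpa using this
      exact Subtype.ext this
    refine DFunLike.ext _ _ fun h => ?_
    rw [hzero h, DirectSum.zero_apply]
  · intro m
    obtain ⟨x, rfl⟩ := hint.2 m
    induction x using DirectSum.induction_on with
    | zero => exact ⟨0, by simp⟩
    | of g y =>
      exact ⟨DirectSum.of _ (ψ g) ⟨(y : M), coarsen_le ψ ℳ g y.2⟩, by
        rw [DirectSum.coeAddMonoidHom_of, DirectSum.coeAddMonoidHom_of]⟩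
    | add x y hx hy =>
      obtain ⟨zx, hzx⟩ := hx
      obtain ⟨zy, hzy⟩ := hy
      exact ⟨zx + zy, by rw [map_add, map_add, hzx, hzy]⟩

end Internal

lemma isGradedModule_coarsen {M : Type} [AddCommGroup M] [Module R M] (ψ : G →+ H)
    {𝒜 : G → AddSubgroup R} {ℳ : G → AddSubgroup M}
    (hgm : IsGradedModule 𝒜 ℳ) : IsGradedModule (coarsen ψ 𝒜) (coarsen ψ ℳ) := by
  constructor
  · intro h h' r m hr hm
    refine coarsen_induction ψ 𝒜
      (p := fun r => ∀ m ∈ coarsen ψ ℳ h', r • m ∈ coarsen ψ ℳ (h + h')) hr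
      (fun g hg x hx => ?_)
      (fun m _ => by show (0 : R) • m ∈ _; rw [zero_smul]; exact zero_mem _)
      (fun x y hx hy m hm => by
        show (x + y) • m ∈ _; rw [add_smul]; exact add_mem (hx m hm) (hy m hm)) m hm
    intro m hm
    refine coarsen_induction ψ ℳ (p := fun m => x • m ∈ coarsen ψ ℳ (h + h')) hm
      (fun g' hg' n hn => ?_)
      (by show x • (0 : M) ∈ _; rw [smul_zero]; exact zero_mem _)
      (fun a b ha hb => by show x • (a + b) ∈ _; rw [smul_add]; exact add_mem ha hb)
    have : x • n ∈ ℳ (g + g') := hgm.1 hx hn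
    have hmem := coarsen_le ψ ℳ (g + g') this
    rwa [map_add, hg, hg'] at hmem
  · letI := Classical.decEq G
    letI := Classical.decEq H
    exact isInternal_coarsen ψ hgm.2

section Slot

variable {κ : Type} {W : κ → Type} [∀ g, AddCommGroup (W g)]

/-- The degree-`g₀` component of the canonical "slot" grading on a direct sum. -/
def slotGrading (g₀ : κ) : AddSubgroup (⨁ g, W g) where
  carrier := {x | ∀ g, g ≠ g₀ → x g = 0}
  zero_mem' := fun g _ => DirectSum.zero_apply g
  add_mem' := fun {x y} hx hy g hg => by
    rw [DirectSum.add_apply, hx g hg, hy g hg, add_zero]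
  neg_mem' := fun {x} hx g hg => by
    rw [DFinsupp.neg_apply, hx g hg, neg_zero]

lemma of_mem_slotGrading [DecidableEq κ] (g₀ : κ) (w : W g₀) :
    DirectSum.of W g₀ w ∈ slotGrading g₀ :=
  fun g hg => DirectSum.of_eq_of_ne _ _ _ (fun h => hg h)

lemma eq_of_mem_slotGrading [DecidableEq κ] {g₀ : κ} {x : ⨁ g, W g}
    (hx : x ∈ slotGrading g₀) : x = DirectSum.of W g₀ (x g₀) := by
  refine DFunLike.ext _ _ fun g => ?_
  by_cases hg : g = g₀
  · subst hg; rw [DirectSum.of_eq_same]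
  · rw [hx g hg, DirectSum.of_eq_of_ne _ _ _ (fun h => hg h)]

lemma isInternal_slotGrading [DecidableEq κ] :
    DirectSum.IsInternal (fun g₀ : κ => slotGrading (W := W) g₀) := by
  have key : ∀ (x : ⨁ g₀, ↥(slotGrading (W := W) g₀)) (g : κ),
      (DirectSum.coeAddMonoidHom _ x) g = ((x g : ⨁ g', W g') g) := by
    intro x g
    induction x using DirectSum.induction_on with
    | zero => simp
    | of g₀ y =>
      rw [DirectSum.coeAddMonoidHom_of]
      by_cases hg : g = g₀
      · subst hg; rw [DirectSum.of_eq_same]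
      · rw [DirectSum.of_eq_of_ne _ _ _ (fun h => hg h)]
        rw [y.2 g hg]; simp
    | add x y hx hy =>
      rw [map_add, DirectSum.add_apply, hx, hy, DirectSum.add_apply,
        AddSubgroup.coe_add, DirectSum.add_apply]
  constructor
  · rw [injective_iff_map_eq_zero]
    intro x hx
    refine DFunLike.ext _ _ fun g₀ => ?_
    have h1 : ((x g₀ : ⨁ g', W g') g₀) = 0 := by rw [← key x g₀, hx]; simp
    have : ((x g₀ : ⨁ g', W g')) = 0 := by
      refine DFunLike.ext _ _ fun g => ?_
      by_cases hg : g = g₀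
      · subst hg; exact h1
      · rw [(x g₀).2 g hg, DirectSum.zero_apply]
    have h0 : x g₀ = 0 := Subtype.ext this
    rw [h0, DirectSum.zero_apply]
  · intro y
    induction y using DirectSum.induction_on with
    | zero => exact ⟨0, by simp⟩
    | of g w =>
      exact ⟨DirectSum.of _ g ⟨DirectSum.of W g w, of_mem_slotGrading g w⟩,
        by rw [DirectSum.coeAddMonoidHom_of]⟩
    | add x y hx hy =>
      obtain ⟨zx, hzx⟩ := hx
      obtain ⟨zy, hzy⟩ := hy
      exact ⟨zx + zy, by rw [map_add, hzx, hzy]⟩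

end Slot

end Helpers

set_option synthInstance.maxHeartbeats 1000000
set_option maxHeartbeats 4000000

open DirectSum in
lemma isSmall_coarsen {G H R : Type} [AddCommGroup G] [AddCommGroup H] [CommRing R]
    (ψ : G →+ H) (𝒜 : G → AddSubgroup R) (h𝒜 : IsGradedRing 𝒜)
    {M : Type} [AddCommGroup M] [Module R M] (ℳ : G → AddSubgroup M)
    (hgm : IsGradedModule 𝒜 ℳ) (hsmall : IsSmall 𝒜 ℳ) :
    IsSmall (coarsen ψ 𝒜) (coarsen ψ ℳ) := by
  letI := Classical.decEq G
  letI := Classical.decEq H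
  intro ι N instN instNmod 𝒩 hgN f hf
  -- graded ring structure on `𝒜`
  letI gmon : SetLike.GradedMonoid 𝒜 :=
    { one_mem := h𝒜.1, mul_mem := fun {i j} {gi gj} ha hb => h𝒜.2.1 ha hb }
  letI gdec : DirectSum.Decomposition 𝒜 := h𝒜.2.2.chooseDecomposition
  letI gring : GradedRing 𝒜 := { gmon, gdec with }
  -- the refined module structures
  letI gsmul : ∀ i, SetLike.GradedSMul 𝒜 (fun g => 𝒩 i (ψ g)) := fun i =>
    ⟨fun {gi gj} {r n} hr hn => by
      have h1 : r • n ∈ 𝒩 i (ψ gi + ψ gj) := (hgN i).1 (coarsen_le ψ 𝒜 gi hr) hn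
      show r • n ∈ 𝒩 i (ψ (gi +ᵥ gj))
      rwa [vadd_eq_add, map_add]⟩
  letI modN : ∀ i, Module R (⨁ g, ↥(𝒩 i (ψ g))) := fun i =>
    GradedModule.isModule 𝒜 (fun g => 𝒩 i (ψ g))
  -- membership facts
  have hmem : ∀ g (m : M), m ∈ ℳ g → ∀ i, f m i ∈ 𝒩 i (ψ g) := fun g m hm i =>
    hf (ψ g) m (coarsen_le ψ ℳ g hm) i
  have hmem2 : ∀ (i : ι) (gr gm : G) (r : R), r ∈ 𝒜 gr → ∀ w : ↥(𝒩 i (ψ gm)),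
      r • (w : N i) ∈ 𝒩 i (ψ (gr + gm)) := by
    intro i gr gm r hr w
    rw [map_add]
    exact (hgN i).1 (coarsen_le ψ 𝒜 gr hr) w.2
  -- the scalar action of homogeneous elements on the refined modules
  have hsmulN : ∀ (i : ι) (gr gm : G) (r : R) (hr : r ∈ 𝒜 gr) (w : ↥(𝒩 i (ψ gm))),
      r • DirectSum.of (fun g' => ↥(𝒩 i (ψ g'))) gm w =
        DirectSum.of (fun g' => ↥(𝒩 i (ψ g'))) (gr + gm)
          ⟨r • (w : N i), hmem2 i gr gm r hr w⟩ := by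
    intro i gr gm r hr w
    show DirectSum.decompose 𝒜 r • DirectSum.of (fun g' => ↥(𝒩 i (ψ g'))) gm w = _
    rw [DirectSum.decompose_of_mem 𝒜 hr, DirectSum.Gmodule.of_smul_of]
    rfl
  -- the morphism into the refined direct sum
  set F₀ : M →+ ⨁ i, ⨁ g, ↥(𝒩 i (ψ g)) :=
    (DirectSum.toAddMonoid (fun g =>
      (DFinsupp.mapRange.addMonoidHom (fun i =>
        (DirectSum.of (fun g' => ↥(𝒩 i (ψ g'))) g).comp
          ((DFinsupp.evalAddMonoidHom (ψ g)).comp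
            (internalEquiv (hgN i).2).symm.toAddMonoidHom))).comp
      (f.toAddMonoidHom.comp ((ℳ g).subtype)))).comp
    (internalEquiv hgm.2).symm.toAddMonoidHom with hF₀
  have K1' : ∀ (g : G) (m : M) (hm : m ∈ ℳ g) (i : ι),
      F₀ m i = DirectSum.of (fun g' => ↥(𝒩 i (ψ g'))) g ⟨f m i, hmem g m hm i⟩ := by
    intro g m hm i
    have e1 : F₀ m = (DFinsupp.mapRange.addMonoidHom (fun i =>
        (DirectSum.of (fun g' => ↥(𝒩 i (ψ g'))) g).comp
          ((DFinsupp.evalAddMonoidHom (ψ g)).comp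
            (internalEquiv (hgN i).2).symm.toAddMonoidHom))) (f m) := by
      rw [hF₀]
      show DirectSum.toAddMonoid _ ((internalEquiv hgm.2).symm m) = _
      rw [internalEquiv_symm_of_mem hgm.2 hm, DirectSum.toAddMonoid_of]
      rfl
    rw [e1]
    show DirectSum.of (fun g' => ↥(𝒩 i (ψ g'))) g
        ((DFinsupp.evalAddMonoidHom (ψ g)) ((internalEquiv (hgN i).2).symm (f m i))) = _
    rw [internalEquiv_symm_of_mem (hgN i).2 (hmem g m hm i)]
    show DirectSum.of (fun g' => ↥(𝒩 i (ψ g'))) g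
        ((DirectSum.of (fun h => ↥(𝒩 i h)) (ψ g) ⟨f m i, hmem g m hm i⟩) (ψ g)) = _
    rw [DirectSum.of_eq_same]
  -- linearity of `F₀`
  have hlin : ∀ (r : R) (m : M), F₀ (r • m) = r • F₀ m := by
    refine internal_induction h𝒜.2.2
      (p := fun r => ∀ m, F₀ (r • m) = r • F₀ m) (fun m => ?_) ?_ ?_
    · show F₀ ((0 : R) • m) = (0 : R) • F₀ m
      rw [zero_smul, map_zero, zero_smul]
    · intro gr r hr
      refine internal_induction hgm.2 (p := fun m => F₀ (r • m) = r • F₀ m) ?_ ?_ ?_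
      · show F₀ (r • (0 : M)) = r • F₀ 0
        rw [smul_zero, map_zero, smul_zero]
      · intro gm m hm
        have hrm : r • m ∈ ℳ (gr + gm) := hgm.1 hr hm
        refine DFunLike.ext _ _ fun i => ?_
        rw [K1' (gr + gm) (r • m) hrm i, DirectSum.smul_apply, K1' gm m hm i,
          hsmulN i gr gm r hr]
        exact congrArg _ (Subtype.ext (show (f (r • m)) i = r • ((f m) i) by
          rw [f.map_smul, DirectSum.smul_apply]))
      · intro a b ha hb
        show F₀ (r • (a + b)) = r • F₀ (a + b)
        rw [smul_add, map_add, ha, hb, map_add, smul_add]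
    · intro r₁ r₂ h1 h2 m
      show F₀ ((r₁ + r₂) • m) = (r₁ + r₂) • F₀ m
      rw [add_smul, map_add, h1, h2, add_smul]
  -- package as a linear map
  set f' : M →ₗ[R] ⨁ i, ⨁ g, ↥(𝒩 i (ψ g)) :=
    { toFun := F₀, map_add' := F₀.map_add, map_smul' := hlin } with hf'def
  -- the slot gradings are graded modules
  have hgm' : ∀ i, IsGradedModule 𝒜
      (fun g₀ => slotGrading (W := fun g => ↥(𝒩 i (ψ g))) g₀) := by
    intro i
    constructor
    · intro g g₀ r x hr hx
      have hx' := eq_of_mem_slotGrading hx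
      rw [hx', hsmulN i g g₀ r hr (x g₀)]
      exact of_mem_slotGrading _ _
    · exact isInternal_slotGrading
  -- `f'` is a graded morphism
  have hf' : IsGradedHom ℳ
      (directSumGrading (fun i g₀ => slotGrading (W := fun g => ↥(𝒩 i (ψ g))) g₀)) f' := by
    intro g m hm
    intro i
    show F₀ m i ∈ _
    rw [K1' g m hm i]
    exact of_mem_slotGrading _ _
  obtain ⟨s, hs⟩ := hsmall ι (fun i => ⨁ g, ↥(𝒩 i (ψ g)))
    (fun i g₀ => slotGrading (W := fun g => ↥(𝒩 i (ψ g))) g₀) hgm' f' hf'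
  refine ⟨s, fun m i hi => ?_⟩
  refine internal_induction hgm.2 (p := fun m => f m i = 0) ?_ ?_ ?_ m
  · show f (0 : M) i = 0
    rw [map_zero]; rfl
  · intro g x hx
    show f x i = 0
    have h0 : f' x i = 0 := hs x i hi
    have h1 : F₀ x i = 0 := h0
    rw [K1' g x hx i] at h1
    have h2 := congrArg (fun y => y g) h1
    simp only [DirectSum.of_eq_same, DirectSum.zero_apply] at h2
    exact Subtype.ext_iff.mp h2
  · intro a b ha hb
    show f (a + b) i = 0
    rw [map_add, DirectSum.add_apply, ha, hb, add_zero]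


/-- **Statement 13** (Proposition, first half): if the `ψ`-coarsening `R_[ψ]` is steady,
then so is `R`. -/
theorem steady_of_coarsening_steady
    {G H R : Type} [AddCommGroup G] [AddCommGroup H] [CommRing R]
    (ψ : G →+ H) (hψ : Function.Surjective ψ)
    (𝒜 : G → AddSubgroup R) (h𝒜 : IsGradedRing 𝒜)
    (hsteady : IsSteady (coarsen ψ 𝒜)) :
    IsSteady 𝒜 := by
  intro M _ _ ℳ hgm hsmall
  exact hsteady M (coarsen ψ ℳ) (isGradedModule_coarsen ψ hgm)
    (isSmall_coarsen ψ 𝒜 h𝒜 ℳ hgm hsmall)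
end

section
/- Let G and H be additive commutative groups, ψ: G → H a surjective group homomorphism, R a G-graded commutative ring, and M, N G-graded R-modules. If the canonical monomorphism h_ψ(M,N): (⨁HOM^G_R(M,N))_[ψ] → ⨁HOM^H_{R_[ψ]}(M_[ψ], N_[ψ]) is an isomorphism, then the canonical monomorphism λ^M: ⊕_{g∈ker(ψ)} Hom_{GrMod^G(R)}(M, N(g)) → Hom_{GrMod^G(R)}(M, ⊕_{g∈ker(ψ)} N(g)) is an isomorphism; equivalently, every morphism M → ⊕_{g∈ker(ψ)} N(g) of G-graded R-modules factors through ⊕_{g∈E} N(g) for some finite subset E ⊆ ker(ψ). -/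
/-!
Common vocabulary: internally graded rings and modules, coarsening of gradings,
graded morphisms, and derived notions (injectivity, cogenerators, smallness, ...),
following Rohrer, "Coarsenings, injectives and Hom functors".
-/

open DirectSum

section Aux

variable {G H R : Type} [AddCommGroup G] [AddCommGroup H] [CommRing R]

lemma mem_gradedHomSubgroup_iff {M N : Type} [AddCommGroup M] [Module R M]
    [AddCommGroup N] [Module R N] (ℳ : G → AddSubgroup M) (𝒩 : G → AddSubgroup N)
    (g : G) (u : M →ₗ[R] N) :
    u ∈ gradedHomSubgroup ℳ 𝒩 g ↔ ∀ g' : G, ∀ m ∈ ℳ g', u m ∈ 𝒩 (g + g') := Iff.rfl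

lemma mem_coarsen_of {M : Type} [AddCommGroup M] (ψ : G →+ H) (ℳ : G → AddSubgroup M)
    {g : G} {h : H} (hg : ψ g = h) {m : M} (hm : m ∈ ℳ g) : m ∈ coarsen ψ ℳ h := by
  have : ℳ g ≤ coarsen ψ ℳ h := le_iSup₂ (f := fun g (_ : g ∈ ψ ⁻¹' {h}) => ℳ g) g hg
  exact this hm

end Aux

/-- **Statement 15** (Lemma 2.60): if the canonical monomorphism
`h_ψ(M,N) : (⨁HOM^G_R(M,N))_[ψ] → ⨁HOM^H_{R_[ψ]}(M_[ψ], N_[ψ])` is an isomorphism —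
expressed here as the equality of the corresponding subgroups of `M →ₗ[R] N`, i.e.
`⨆_{g : G} Hom(M, N(g)) = ⨆_{h : H} Hom(M_[ψ], N_[ψ](h))` — then `λ^M_{ker ψ}` is an
isomorphism, i.e. every graded morphism `M → ⨁_{g ∈ ker ψ} N(g)` factors through a finite
sub-sum. -/
theorem factors_through_finite_subsum_of_gradedHom_coarsening_iso
    {G H R M N : Type} [AddCommGroup G] [AddCommGroup H] [CommRing R]
    [AddCommGroup M] [Module R M] [AddCommGroup N] [Module R N]
    (ψ : G →+ H) (hψ : Function.Surjective ψ)
    (𝒜 : G → AddSubgroup R) (h𝒜 : IsGradedRing 𝒜)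
    (ℳ : G → AddSubgroup M) (hℳ : IsGradedModule 𝒜 ℳ)
    (𝒩 : G → AddSubgroup N) (h𝒩 : IsGradedModule 𝒜 𝒩)
    (hiso : (⨆ g : G, gradedHomSubgroup (R := R) ℳ 𝒩 g)
      = ⨆ h : H, gradedHomSubgroup (R := R) (coarsen ψ ℳ) (coarsen ψ 𝒩) h) :
    ∀ f : M →ₗ[R] ⨁ (_ : ψ.ker), N,
      IsGradedHom ℳ (directSumGrading fun (k : ψ.ker) (h : G) => 𝒩 ((k : G) + h)) f →
        ∃ s : Finset ψ.ker, ∀ (m : M) (k : ψ.ker), k ∉ s → f m k = 0 := by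
  classical
  intro f hf
  have hN2 : DirectSum.IsInternal 𝒩 := h𝒩.2
  have hM2 : DirectSum.IsInternal ℳ := hℳ.2
  -- the "total sum" linear map
  set σ : (⨁ (_ : ψ.ker), N) →ₗ[R] N := DirectSum.toModule R ψ.ker N fun _ => LinearMap.id
    with hσdef
  have hσof : ∀ (k : ψ.ker) (n : N), σ (DirectSum.of (fun _ => N) k n) = n := by
    intro k n
    have := DirectSum.toModule_lof (R := R) (ι := ψ.ker) (M := fun _ => N)
      (φ := fun _ => LinearMap.id) k n
    simpa [hσdef, DirectSum.lof_eq_of] using this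
  have hσsum : ∀ x : ⨁ (_ : ψ.ker), N, σ x = ∑ k ∈ x.support, x k := by
    intro x
    conv_lhs => rw [← DirectSum.sum_support_of x]
    rw [map_sum]
    exact Finset.sum_congr rfl fun k _ => hσof k (x k)
  set u : M →ₗ[R] N := σ ∘ₗ f with hu
  have hfmem : ∀ (g : G) (m : M), m ∈ ℳ g → ∀ k : ψ.ker, f m k ∈ 𝒩 ((k : G) + g) :=
    fun g m hm k => hf g m hm k
  -- `u` lies in the degree-0 part of the coarsened graded Hom
  have huRHS : u ∈ ⨆ h : H, gradedHomSubgroup (R := R) (coarsen ψ ℳ) (coarsen ψ 𝒩) h := by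
    refine (le_iSup (fun h : H =>
      gradedHomSubgroup (R := R) (coarsen ψ ℳ) (coarsen ψ 𝒩) h) 0) ?_
    rw [mem_gradedHomSubgroup_iff]
    intro h' m hm
    have key : coarsen ψ ℳ h' ≤ (coarsen ψ 𝒩 (0 + h')).comap u.toAddMonoidHom := by
      refine iSup₂_le fun g hg => ?_
      intro m hm
      simp only [AddSubgroup.mem_comap, LinearMap.toAddMonoidHom_coe]
      have hum : u m = ∑ k ∈ (f m).support, f m k := by
        rw [hu]; exact hσsum (f m)
      rw [hum]
      refine AddSubgroup.sum_mem _ fun k _ => ?_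
      refine mem_coarsen_of ψ 𝒩 ?_ (hfmem g m hm k)
      have hk0 : ψ (k : G) = 0 := k.2
      rw [map_add, hk0, zero_add, zero_add]
      simpa using hg
    exact key hm
  have huLHS : u ∈ ⨆ g : G, gradedHomSubgroup (R := R) ℳ 𝒩 g := hiso ▸ huRHS
  -- decompose `u` into homogeneous pieces
  have huLHS' : u ∈ ⨆ g : G,
      AddSubgroup.toIntSubmodule (gradedHomSubgroup (R := R) ℳ 𝒩 g) := by
    have hmap := (OrderIso.map_iSup
      (AddSubgroup.toIntSubmodule : AddSubgroup (M →ₗ[R] N) ≃o Submodule ℤ (M →ₗ[R] N))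
      (fun g : G => gradedHomSubgroup (R := R) ℳ 𝒩 g))
    rw [← hmap]
    exact huLHS
  obtain ⟨v, hv⟩ := (Submodule.mem_iSup_iff_exists_dfinsupp' _ u).mp huLHS'
  have hvg : ∀ g' : G, (v g' : M →ₗ[R] N) ∈ gradedHomSubgroup (R := R) ℳ 𝒩 g' :=
    fun g' => (v g').2
  refine ⟨v.support.preimage (Subtype.val) (Subtype.val_injective.injOn), ?_⟩
  -- the key claim for homogeneous elements
  have hE : ∀ (k : ψ.ker), (k : G) ∉ v.support → ∀ (g : G) (m : M), m ∈ ℳ g →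
      f m k = 0 := by
    intro k hk g m hm
    by_cases hfmk : f m k = 0
    · exact hfmk
    have hksupp : k ∈ (f m).support := DFinsupp.mem_support_iff.mpr hfmk
    set x : ⨁ d, (𝒩 d : AddSubgroup N) := ∑ k' ∈ (f m).support.attach,
      DirectSum.of (fun d => (𝒩 d : AddSubgroup N)) (((k' : ψ.ker) : G) + g)
        ⟨f m (k' : ψ.ker), hfmem g m hm (k' : ψ.ker)⟩ with hx
    set y : ⨁ d, (𝒩 d : AddSubgroup N) := ∑ g' ∈ v.support.attach,
      DirectSum.of (fun d => (𝒩 d : AddSubgroup N)) ((g' : G) + g)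
        ⟨(v (g' : G) : M →ₗ[R] N) m, hvg (g' : G) g m hm⟩ with hy
    have hcx : DirectSum.coeAddMonoidHom 𝒩 x = u m := by
      rw [hx, map_sum]
      simp only [DirectSum.coeAddMonoidHom_of]
      rw [Finset.sum_attach ((f m).support) (fun k' => f m k')]
      rw [hu]
      exact (hσsum (f m)).symm
    have hcy : DirectSum.coeAddMonoidHom 𝒩 y = u m := by
      rw [hy, map_sum]
      simp only [DirectSum.coeAddMonoidHom_of]
      rw [Finset.sum_attach (v.support) (fun g' => (v g' : M →ₗ[R] N) m)]
      have hsum : (∑ g' ∈ v.support, (v g' : M →ₗ[R] N)) = u := hv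
      rw [← LinearMap.sum_apply, hsum]
    have hxy : x = y := hN2.injective (hcx.trans hcy.symm)
    -- evaluate both sides in degree `k + g`
    set ev : (⨁ d, (𝒩 d : AddSubgroup N)) →+ N :=
      ((𝒩 ((k : G) + g)).subtype).comp (DFinsupp.evalAddMonoidHom ((k : G) + g)) with hev
    have hev0 : ∀ (i : G) (b : (𝒩 i : AddSubgroup N)), i ≠ (k : G) + g →
        ev (DirectSum.of (fun d => (𝒩 d : AddSubgroup N)) i b) = 0 := by
      intro i b hib
      show ((DirectSum.of (fun d => (𝒩 d : AddSubgroup N)) i b) ((k : G) + g) : N) = 0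
      rw [DirectSum.of_eq_of_ne _ _ _ hib.symm]
      rfl
    have hev1 : ∀ (b : (𝒩 ((k : G) + g) : AddSubgroup N)),
        ev (DirectSum.of (fun d => (𝒩 d : AddSubgroup N)) ((k : G) + g) b) = b := by
      intro b
      show ((DirectSum.of (fun d => (𝒩 d : AddSubgroup N)) ((k : G) + g) b)
        ((k : G) + g) : N) = b
      rw [DirectSum.of_eq_same]
    have hx' : ev x = f m k := by
      rw [hx, map_sum]
      rw [Finset.sum_eq_single_of_mem (⟨k, hksupp⟩ : {z // z ∈ (f m).support})
        (Finset.mem_attach _ _)]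
      · exact hev1 _
      · intro b _ hb
        refine hev0 _ _ fun hcontra => hb ?_
        have hbk : ((b : ψ.ker) : G) = (k : G) := add_right_cancel hcontra
        exact Subtype.ext (Subtype.ext hbk)
    have hy' : ev y = 0 := by
      rw [hy, map_sum]
      refine Finset.sum_eq_zero fun g' _ => hev0 _ _ fun hcontra => ?_
      have hgk : ((g' : G)) = (k : G) := add_right_cancel hcontra
      exact hk (hgk ▸ g'.2)
    rw [← hx', hxy, hy']
  -- conclude for arbitrary elements by decomposing into homogeneous pieces
  intro m k hk
  have hk' : (k : G) ∉ v.support := fun hmem => hk (Finset.mem_preimage.mpr hmem)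
  obtain ⟨w, hw⟩ := hM2.surjective m
  have hm : m = ∑ g ∈ w.support, ((w g : M)) := by
    rw [← hw]
    conv_lhs => rw [← DirectSum.sum_support_of w]
    rw [map_sum]
    simp only [DirectSum.coeAddMonoidHom_of]
  rw [hm, map_sum, DFinsupp.finset_sum_apply]
  exact Finset.sum_eq_zero fun g _ => hE k hk' g (w g) (w g).2
end

section
/- Let G and H be additive commutative groups, ψ: G → H a surjective group homomorphism, R a G-graded commutative ring, and M a G-graded R-module. The natural transformation h_ψ^M: (⨁HOM^G_R(M,•))_[ψ] → ⨁HOM^H_{R_[ψ]}(M_[ψ], •_[ψ]) is an isomorphism (i.e., h_ψ(M,N) is an isomorphism for every G-graded R-module N) if and only if M is small or the kernel of ψ is finite. -/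
/-!
Common vocabulary: internally graded rings and modules, coarsening of gradings,
graded morphisms, and derived notions (injectivity, cogenerators, smallness, ...),
following Rohrer, "Coarsenings, injectives and Hom functors".
-/

open DirectSum

set_option maxHeartbeats 2000000
set_option synthInstance.maxHeartbeats 1000000
set_option linter.unusedSectionVars false

section Internal

variable {G : Type} [AddCommGroup G] [DecidableEq G]
variable {W : Type} [AddCommGroup W] {𝒩 : G → AddSubgroup W}

/-- Decomposition equiv of an internal direct sum. -/
noncomputable def intDec (hI : DirectSum.IsInternal 𝒩) : W ≃+ ⨁ g, 𝒩 g :=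
  (AddEquiv.ofBijective (DirectSum.coeAddMonoidHom 𝒩) hI).symm

lemma intDec_symm_apply (hI : DirectSum.IsInternal 𝒩) (z : ⨁ g, 𝒩 g) :
    (intDec hI).symm z = DirectSum.coeAddMonoidHom 𝒩 z := by
  simp [intDec, AddEquiv.ofBijective]; rfl

lemma intDec_of_mem (hI : DirectSum.IsInternal 𝒩) {k : G} {y : W} (hy : y ∈ 𝒩 k) :
    intDec hI y = DirectSum.of (fun g => ↥(𝒩 g)) k ⟨y, hy⟩ := by
  apply (intDec hI).symm.injective
  rw [AddEquiv.symm_apply_apply, intDec_symm_apply, DirectSum.coeAddMonoidHom_of]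

/-- Projection onto the degree-`j` component of an internal direct sum. -/
noncomputable def intProj (hI : DirectSum.IsInternal 𝒩) (j : G) : W →+ W :=
  ((𝒩 j).subtype.comp (DFinsupp.evalAddMonoidHom j)).comp (intDec hI).toAddMonoidHom

lemma intProj_apply (hI : DirectSum.IsInternal 𝒩) (j : G) (x : W) :
    intProj hI j x = ((intDec hI x) j : W) := rfl

lemma intProj_mem (hI : DirectSum.IsInternal 𝒩) (j : G) (x : W) :
    intProj hI j x ∈ 𝒩 j := ((intDec hI x) j).2

lemma intProj_of_mem (hI : DirectSum.IsInternal 𝒩) {k j : G} {y : W} (hy : y ∈ 𝒩 k) :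
    intProj hI j y = if k = j then y else 0 := by
  rw [intProj_apply, intDec_of_mem hI hy]
  by_cases h : k = j
  · subst h; rw [DirectSum.of_eq_same, if_pos rfl]
  · rw [DirectSum.of_eq_of_ne _ _ _ (Ne.symm h), if_neg h]; rfl

lemma intInduction (hI : DirectSum.IsInternal 𝒩) {P : W → Prop}
    (h0 : P 0) (hhom : ∀ k : G, ∀ y ∈ 𝒩 k, P y) (hadd : ∀ x y, P x → P y → P (x + y)) :
    ∀ x, P x := by
  intro x
  obtain ⟨z, rfl⟩ := (intDec hI).symm.surjective x
  induction z using DirectSum.induction_on with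
  | zero => simpa using h0
  | of k y =>
      rw [intDec_symm_apply, DirectSum.coeAddMonoidHom_of]
      exact hhom k _ y.2
  | add a b ha hb => rw [map_add]; exact hadd _ _ ha hb

lemma intProj_sum (hI : DirectSum.IsInternal 𝒩) (x : W) (t : Finset G)
    (ht : ∀ j ∉ t, intProj hI j x = 0) : x = ∑ j ∈ t, intProj hI j x := by
  haveI : ∀ (i : G) (x : ↥(𝒩 i)), Decidable (x ≠ 0) := fun i x => Classical.dec _
  have hx : x = (intDec hI).symm (intDec hI x) := (AddEquiv.symm_apply_apply _ _).symm
  have hsum : x = ∑ j ∈ (intDec hI x).support, intProj hI j x := by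
    have h1 : DirectSum.coeAddMonoidHom 𝒩
        (∑ j ∈ (intDec hI x).support, DirectSum.of (fun g => ↥(𝒩 g)) j (intDec hI x j))
        = ∑ j ∈ (intDec hI x).support, intProj hI j x := by
      rw [map_sum]
      exact Finset.sum_congr rfl fun j _ => by
        rw [DirectSum.coeAddMonoidHom_of, intProj_apply]
    rw [DirectSum.sum_support_of, ← intDec_symm_apply hI] at h1
    exact hx.trans h1
  refine hsum.trans (Finset.sum_subset ?_ ?_)
  · intro j hj
    by_contra hjt
    have := ht j hjt
    rw [intProj_apply] at this
    exact (DFinsupp.mem_support_iff.mp hj) (by exact_mod_cast Subtype.ext this)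
  · intro j _ hj
    rw [intProj_apply, DFinsupp.notMem_support_iff.mp hj]; rfl

lemma intIndep (hI : DirectSum.IsInternal 𝒩) (t : Finset G) (w : G → W)
    (hw : ∀ g ∈ t, w g ∈ 𝒩 g) (hsum : ∑ g ∈ t, w g = 0) : ∀ g ∈ t, w g = 0 := by
  intro g hg
  have h := congrArg (intProj hI g) hsum
  rw [map_sum, map_zero] at h
  have e1 : ∑ g' ∈ t, intProj hI g (w g') = ∑ g' ∈ t, (if g' = g then w g' else 0) :=
    Finset.sum_congr rfl fun g' hg' => intProj_of_mem hI (hw g' hg')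
  rw [e1, Finset.sum_ite_eq' t g w, if_pos hg] at h
  exact h

lemma mem_biSup_iff (hI : DirectSum.IsInternal 𝒩) (S : Set G) (x : W) :
    x ∈ ⨆ g ∈ S, 𝒩 g ↔ ∀ j ∉ S, intProj hI j x = 0 := by
  constructor
  · intro hx
    rw [iSup_subtype'] at hx
    refine AddSubgroup.iSup_induction (x := x) _ hx (fun i y hy => ?_) (fun j _ => map_zero _)
      (fun a b ha hb j hj => by rw [map_add, ha j hj, hb j hj, add_zero])
    intro j hj
    rw [intProj_of_mem hI hy, if_neg]
    rintro rfl; exact hj i.2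
  · intro hj
    classical
    rw [intProj_sum hI x (intDec hI x).support (fun j hjs => by
      rw [intProj_apply, DFinsupp.notMem_support_iff.mp hjs]; rfl)]
    refine AddSubgroup.sum_mem _ fun j _ => ?_
    by_cases hjS : j ∈ S
    · exact (le_iSup₂ (f := fun g (_ : g ∈ S) => 𝒩 g) j hjS) (intProj_mem hI j x)
    · rw [hj j hjS]; exact zero_mem _

end Internal

section Helpers2

variable {G : Type} [AddCommGroup G] [DecidableEq G]

lemma coe_eq_sum_support {W : Type} [AddCommGroup W] {𝒩 : G → AddSubgroup W}
    [∀ (g : G) (x : ↥(𝒩 g)), Decidable (x ≠ 0)] (z : ⨁ g, 𝒩 g) :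
    DirectSum.coeAddMonoidHom 𝒩 z = ∑ g ∈ z.support, (z g : W) := by
  have h1 : DirectSum.coeAddMonoidHom 𝒩
      (∑ g ∈ z.support, DirectSum.of (fun g => ↥(𝒩 g)) g (z g)) = ∑ g ∈ z.support, (z g : W) := by
    rw [map_sum]
    exact Finset.sum_congr rfl fun g _ => DirectSum.coeAddMonoidHom_of _ _ _
  rwa [DirectSum.sum_support_of] at h1

lemma isInternal_reindex {W : Type} [AddCommGroup W] {𝒩 : G → AddSubgroup W}
    (e : G ≃ G) (hI : DirectSum.IsInternal 𝒩) :
    DirectSum.IsInternal (fun g => 𝒩 (e g)) := by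
  classical
  constructor
  · rw [injective_iff_map_eq_zero]
    intro z hz
    have hcoe : ∑ g ∈ z.support, ((z g : W)) = 0 := by
      rw [← coe_eq_sum_support z]; exact hz
    have hmem : ∀ j ∈ z.support.image e, ((z (e.symm j) : W)) ∈ 𝒩 j := by
      intro j _
      simpa only [e.apply_symm_apply] using (z (e.symm j)).2
    have hsum : ∑ j ∈ z.support.image e, ((z (e.symm j) : W)) = 0 := by
      rw [Finset.sum_image (fun a _ b _ h => e.injective h)]
      exact (Finset.sum_congr rfl fun x _ =>
        congrArg (fun t => ((z t : W))) (e.symm_apply_apply x)).trans hcoe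
    have hzero := intIndep hI _ _ hmem hsum
    refine DFinsupp.ext fun g => ?_
    by_cases hg : g ∈ z.support
    · have h4 := hzero (e g) (Finset.mem_image_of_mem e hg)
      have h5 : ((z g : W)) = 0 :=
        (congrArg (fun t => ((z t : W))) (e.symm_apply_apply g)).symm.trans h4
      simpa using h5
    · simpa using DFinsupp.notMem_support_iff.mp hg
  · intro x
    refine intInduction hI (P := fun x => ∃ z, DirectSum.coeAddMonoidHom (fun g => 𝒩 (e g)) z = x)
      ⟨0, map_zero _⟩ ?_ ?_ x
    · intro k y hy
      exact ⟨DirectSum.of (fun g => ↥(𝒩 (e g))) (e.symm k)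
        ⟨y, by rw [e.apply_symm_apply]; exact hy⟩, DirectSum.coeAddMonoidHom_of _ _ _⟩
    · rintro a b ⟨za, ha⟩ ⟨zb, hb⟩
      exact ⟨za + zb, by rw [map_add, ha, hb]⟩

lemma isInternal_directSumGrading {ι : Type} {Nf : ι → Type} [∀ i, AddCommGroup (Nf i)]
    (𝒩 : ∀ i, G → AddSubgroup (Nf i)) (hI : ∀ i, DirectSum.IsInternal (𝒩 i)) :
    DirectSum.IsInternal (directSumGrading 𝒩) := by
  classical
  constructor
  · rw [injective_iff_map_eq_zero]
    intro z hz
    have hcoe : ∑ g ∈ z.support, ((z g : ⨁ i, Nf i)) = 0 := by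
      rw [← coe_eq_sum_support z]; exact hz
    have hzg : ∀ g ∈ z.support, (z g : ⨁ i, Nf i) = 0 := by
      have hind : ∀ i : ι, ∀ g ∈ z.support, ((z g : ⨁ i, Nf i)) i = 0 := by
        intro i
        refine intIndep (hI i) z.support (fun g => ((z g : ⨁ i, Nf i)) i)
          (fun g hg => (z g).2 i) ?_
        have h2 := congrArg (DFinsupp.evalAddMonoidHom (β := fun i => Nf i) i) hcoe
        rw [map_sum, map_zero] at h2
        exact h2
      intro g hg
      exact DFinsupp.ext fun i => hind i g hg
    refine DFinsupp.ext fun g => ?_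
    by_cases hg : g ∈ z.support
    · simpa using hzg g hg
    · simpa using DFinsupp.notMem_support_iff.mp hg
  · intro x
    have hrange : x ∈ (DirectSum.coeAddMonoidHom (directSumGrading 𝒩)).range := by
      induction x using DirectSum.induction_on with
      | zero => exact zero_mem _
      | add a b ha hb => exact add_mem ha hb
      | of i y =>
          refine intInduction (hI i)
            (P := fun y => DirectSum.of Nf i y ∈
              (DirectSum.coeAddMonoidHom (directSumGrading 𝒩)).range) ?_ ?_ ?_ y
          · show DirectSum.of Nf i 0 ∈ _
            rw [map_zero]; exact zero_mem _
          · intro g y hy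
            refine ⟨DirectSum.of (fun g => ↥(directSumGrading 𝒩 g)) g ⟨DirectSum.of Nf i y, ?_⟩,
              DirectSum.coeAddMonoidHom_of _ _ _⟩
            intro i'
            by_cases hii : i = i'
            · subst hii; rw [DirectSum.of_eq_same]; exact hy
            · rw [DirectSum.of_eq_of_ne _ _ _ (Ne.symm hii)]; exact zero_mem _
          · intro a b ha hb
            show DirectSum.of Nf i (a + b) ∈ _
            rw [map_add]; exact add_mem ha hb
    exact hrange

lemma mem_iSup_exists_finset {W : Type} [AddCommGroup W] {κ : Type} (K : κ → AddSubgroup W)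
    {x : W} (hx : x ∈ ⨆ k, K k) :
    ∃ (t : Finset κ) (w : κ → W), (∀ k, w k ∈ K k) ∧ x = ∑ k ∈ t, w k := by
  classical
  refine AddSubgroup.iSup_induction K hx
    (C := fun y => ∃ (t : Finset κ) (w : κ → W), (∀ k, w k ∈ K k) ∧ y = ∑ k ∈ t, w k) ?_ ?_ ?_
  · intro i y hy
    refine ⟨{i}, fun k => if h : k = i then y else 0, fun k => ?_, ?_⟩
    · by_cases h : k = i
      · subst h; simpa using hy
      · simp only [dif_neg h]; exact zero_mem _
    · rw [Finset.sum_singleton]; simp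
  · exact ⟨∅, fun _ => 0, fun k => zero_mem _, by simp⟩
  · rintro a b ⟨t, w, hw, rfl⟩ ⟨t', w', hw', rfl⟩
    have key : ∀ (s s' : Finset κ) (v : κ → W), s ⊆ s' →
        ∑ k ∈ s', (if k ∈ s then v k else 0) = ∑ k ∈ s, v k := by
      intro s s' v hss
      rw [← Finset.sum_subset hss (fun k _ hk => if_neg hk)]
      exact Finset.sum_congr rfl fun k hk => if_pos hk
    refine ⟨t ∪ t', fun k => (if k ∈ t then w k else 0) + (if k ∈ t' then w' k else 0),
      fun k => add_mem (by split_ifs with h; exacts [hw k, zero_mem _])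
        (by split_ifs with h; exacts [hw' k, zero_mem _]), ?_⟩
    rw [Finset.sum_add_distrib, key t (t ∪ t') w Finset.subset_union_left,
      key t' (t ∪ t') w' Finset.subset_union_right]

end Helpers2



section Helpers3

variable {G R : Type} [AddCommGroup G] [CommRing R]

lemma isGradedModule_shift {M : Type} [AddCommGroup M] [Module R M] {𝒜 : G → AddSubgroup R}
    {𝒩 : G → AddSubgroup M} (h𝒩 : IsGradedModule 𝒜 𝒩) (a : G) :
    IsGradedModule 𝒜 (fun g => 𝒩 (g + a)) := by
  refine ⟨?_, ?_⟩
  · intro g h r m hr hm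
    have := h𝒩.1 hr hm
    rwa [← add_assoc] at this
  · letI := Classical.decEq G
    exact isInternal_reindex (Equiv.addRight a) h𝒩.2

lemma isGradedModule_directSumGrading {ι : Type} {Nf : ι → Type} [∀ i, AddCommGroup (Nf i)]
    [∀ i, Module R (Nf i)] {𝒜 : G → AddSubgroup R} (𝒩 : ∀ i, G → AddSubgroup (Nf i))
    (h𝒩 : ∀ i, IsGradedModule 𝒜 (𝒩 i)) : IsGradedModule 𝒜 (directSumGrading 𝒩) := by
  refine ⟨?_, ?_⟩
  · intro g h r x hr hx
    intro i
    rw [DirectSum.smul_apply]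
    exact (h𝒩 i).1 hr (hx i)
  · letI := Classical.decEq G
    exact isInternal_directSumGrading 𝒩 (fun i => (h𝒩 i).2)

variable [DecidableEq G]

lemma intProj_smul {M : Type} [AddCommGroup M] [Module R M] {𝒜 : G → AddSubgroup R}
    {𝒩 : G → AddSubgroup M} (hI : DirectSum.IsInternal 𝒩)
    (hNs : ∀ {g h : G} {r : R} {m : M}, r ∈ 𝒜 g → m ∈ 𝒩 h → r • m ∈ 𝒩 (g + h))
    {g0 : G} {r : R} (hr : r ∈ 𝒜 g0) (j : G) (x : M) :
    intProj hI (g0 + j) (r • x) = r • intProj hI j x := by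
  refine intInduction hI (P := fun x => intProj hI (g0 + j) (r • x) = r • intProj hI j x)
    ?_ ?_ ?_ x
  · beta_reduce
    rw [smul_zero, map_zero, map_zero, smul_zero]
  · intro k y hy
    beta_reduce
    rw [intProj_of_mem hI hy, intProj_of_mem hI (hNs hr hy)]
    by_cases h : k = j
    · subst h; rw [if_pos rfl, if_pos rfl]
    · rw [if_neg (fun hc => h (add_left_cancel hc)), if_neg h, smul_zero]
  · intro a b ha hb
    beta_reduce
    rw [smul_add, map_add, map_add, smul_add, ha, hb]

end Helpers3

section HomComp

variable {G R : Type} [AddCommGroup G] [DecidableEq G] [CommRing R]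
variable {M N : Type} [AddCommGroup M] [Module R M] [AddCommGroup N] [Module R N]
variable {𝒜 : G → AddSubgroup R} {ℳ : G → AddSubgroup M} {𝒩 : G → AddSubgroup N}

/-- The degree-`g` component of a linear map between internally graded modules. -/
noncomputable def homComp (hM : DirectSum.IsInternal ℳ) (hN : DirectSum.IsInternal 𝒩)
    (u : M →ₗ[R] N) (g : G) : M →+ N :=
  (DirectSum.toAddMonoid (fun k => (intProj hN (g + k)).comp
    (u.toAddMonoidHom.comp (ℳ k).subtype))).comp (intDec hM).toAddMonoidHom

lemma homComp_of_mem (hM : DirectSum.IsInternal ℳ) (hN : DirectSum.IsInternal 𝒩)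
    (u : M →ₗ[R] N) (g : G) {k : G} {m : M} (hm : m ∈ ℳ k) :
    homComp hM hN u g m = intProj hN (g + k) (u m) := by
  unfold homComp
  rw [AddMonoidHom.comp_apply]
  have h1 : (intDec hM).toAddMonoidHom m = intDec hM m := rfl
  rw [h1, intDec_of_mem hM hm, DirectSum.toAddMonoid_of]
  rfl

lemma homComp_smul
    (hA : DirectSum.IsInternal 𝒜)
    (hM : DirectSum.IsInternal ℳ) (hN : DirectSum.IsInternal 𝒩)
    (hMs : ∀ {g h : G} {r : R} {m : M}, r ∈ 𝒜 g → m ∈ ℳ h → r • m ∈ ℳ (g + h))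
    (hNs : ∀ {g h : G} {r : R} {m : N}, r ∈ 𝒜 g → m ∈ 𝒩 h → r • m ∈ 𝒩 (g + h))
    (u : M →ₗ[R] N) (g : G) (r : R) (m : M) :
    homComp hM hN u g (r • m) = r • homComp hM hN u g m := by
  have step1 : ∀ (g0 : G) (r0 : R), r0 ∈ 𝒜 g0 → ∀ m : M,
      homComp hM hN u g (r0 • m) = r0 • homComp hM hN u g m := by
    intro g0 r0 hr0
    refine intInduction hM
      (P := fun m => homComp hM hN u g (r0 • m) = r0 • homComp hM hN u g m) ?_ ?_ ?_
    · beta_reduce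
      rw [smul_zero, map_zero, smul_zero]
    · intro k y hy
      beta_reduce
      rw [homComp_of_mem hM hN u g (hMs hr0 hy), homComp_of_mem hM hN u g hy,
        LinearMap.map_smul]
      have hc : g + (g0 + k) = g0 + (g + k) := by abel
      rw [hc, intProj_smul hN hNs hr0 (g + k) (u y)]
    · intro a b ha hb
      beta_reduce
      rw [smul_add, map_add, map_add, smul_add, ha, hb]
  refine intInduction hA
    (P := fun r => homComp hM hN u g (r • m) = r • homComp hM hN u g m) ?_ ?_ ?_ r
  · beta_reduce
    rw [zero_smul, zero_smul, map_zero]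
  · intro g0 r0 hr0; exact step1 g0 r0 hr0 m
  · intro a b ha hb
    beta_reduce
    rw [add_smul, add_smul, map_add, ha, hb]

/-- The degree-`g` component as a linear map. -/
noncomputable def homCompL
    (hA : DirectSum.IsInternal 𝒜)
    (hM : DirectSum.IsInternal ℳ) (hN : DirectSum.IsInternal 𝒩)
    (hMs : ∀ {g h : G} {r : R} {m : M}, r ∈ 𝒜 g → m ∈ ℳ h → r • m ∈ ℳ (g + h))
    (hNs : ∀ {g h : G} {r : R} {m : N}, r ∈ 𝒜 g → m ∈ 𝒩 h → r • m ∈ 𝒩 (g + h))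
    (u : M →ₗ[R] N) (g : G) : M →ₗ[R] N where
  toFun := homComp hM hN u g
  map_add' := map_add _
  map_smul' := homComp_smul hA hM hN (fun {_ _ _ _} => hMs) (fun {_ _ _ _} => hNs) u g

lemma homCompL_mem_gradedHomSubgroup
    (hA : DirectSum.IsInternal 𝒜)
    (hM : DirectSum.IsInternal ℳ) (hN : DirectSum.IsInternal 𝒩)
    (hMs : ∀ {g h : G} {r : R} {m : M}, r ∈ 𝒜 g → m ∈ ℳ h → r • m ∈ ℳ (g + h))
    (hNs : ∀ {g h : G} {r : R} {m : N}, r ∈ 𝒜 g → m ∈ 𝒩 h → r • m ∈ 𝒩 (g + h))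
    (u : M →ₗ[R] N) (g : G) :
    homCompL hA hM hN (fun {_ _ _ _} => hMs) (fun {_ _ _ _} => hNs) u g
      ∈ gradedHomSubgroup (R := R) ℳ 𝒩 g := by
  intro g' m hm
  show homComp hM hN u g m ∈ 𝒩 (g + g')
  rw [homComp_of_mem hM hN u g hm]
  exact intProj_mem hN (g + g') (u m)

lemma homComp_sum {H : Type} [AddCommGroup H] (ψ : G →+ H)
    (hM : DirectSum.IsInternal ℳ) (hN : DirectSum.IsInternal 𝒩)
    (u : M →ₗ[R] N) (h : H)
    (hu : ∀ h' : H, ∀ m ∈ coarsen ψ ℳ h', u m ∈ coarsen ψ 𝒩 (h + h'))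
    (t : Finset G) (ht : ∀ g : G, ψ g = h → g ∉ t → ∀ m : M, homComp hM hN u g m = 0) :
    ∀ m : M, u m = ∑ g ∈ t, homComp hM hN u g m := by
  classical
  refine intInduction hM
    (P := fun m => u m = ∑ g ∈ t, homComp hM hN u g m) ?_ ?_ ?_
  · beta_reduce
    rw [map_zero]
    rw [Finset.sum_congr rfl fun g _ => map_zero (homComp hM hN u g), Finset.sum_const_zero]
  · intro k m hm
    beta_reduce
    have hmc : m ∈ coarsen ψ ℳ (ψ k) :=
      (le_iSup₂ (f := fun g (_ : g ∈ ψ ⁻¹' {ψ k}) => ℳ g) k rfl) hm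
    have hum : u m ∈ coarsen ψ 𝒩 (h + ψ k) := hu (ψ k) m hmc
    have hvanish : ∀ j : G, ψ j ≠ h + ψ k → intProj hN j (u m) = 0 := by
      intro j hj
      exact (mem_biSup_iff hN (ψ ⁻¹' {h + ψ k}) (u m)).mp hum j (by simpa using hj)
    have hm_eq : u m = ∑ j ∈ t.image (· + k), intProj hN j (u m) := by
      refine intProj_sum hN (u m) _ ?_
      intro j hjt'
      by_cases hψ : ψ j = h + ψ k
      · have hg : ψ (j - k) = h := by rw [map_sub, hψ]; abel
        have hgt : j - k ∉ t := fun hmem =>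
          hjt' (Finset.mem_image.mpr ⟨j - k, hmem, by rw [sub_add_cancel]⟩)
        have h0 := ht (j - k) hg hgt m
        rw [homComp_of_mem hM hN u _ hm] at h0
        rwa [sub_add_cancel] at h0
      · exact hvanish j hψ
    rw [hm_eq, Finset.sum_image (fun a _ b _ hab => by exact add_right_cancel hab)]
    exact Finset.sum_congr rfl fun g _ => (homComp_of_mem hM hN u g hm).symm
  · intro a b ha hb
    beta_reduce
    rw [map_add, ha, hb, ← Finset.sum_add_distrib]
    exact Finset.sum_congr rfl fun g _ => (map_add _ _ _).symm

end HomComp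


section FinsetLemmas

lemma preimage_finite {G H : Type} [AddCommGroup G] [AddCommGroup H] (ψ : G →+ H)
    (hker : Finite ψ.ker) (hsurj : Function.Surjective ψ) (h : H) :
    (ψ ⁻¹' {h} : Set G).Finite := by
  obtain ⟨g0, rfl⟩ := hsurj h
  have hks : (ψ.ker : Set G).Finite := by
    rw [← Set.finite_coe_iff] at *
    exact hker
  have himg : (ψ ⁻¹' {ψ g0} : Set G) = (fun k => g0 + k) '' (ψ.ker : Set G) := by
    ext x
    simp only [Set.mem_preimage, Set.mem_singleton_iff, Set.mem_image, SetLike.mem_coe,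
      AddMonoidHom.mem_ker]
    constructor
    · intro hx
      exact ⟨x - g0, by rw [map_sub, hx, sub_self], by abel⟩
    · rintro ⟨k, hk, rfl⟩
      rw [map_add, hk, add_zero]
  rw [himg]
  exact hks.image _

variable {G H R : Type} [AddCommGroup G] [AddCommGroup H] [DecidableEq G] [CommRing R]
variable {M N : Type} [AddCommGroup M] [Module R M] [AddCommGroup N] [Module R N]
variable {𝒜 : G → AddSubgroup R} {ℳ : G → AddSubgroup M} {𝒩 : G → AddSubgroup N}

lemma exists_finset_of_small (ψ : G →+ H) (h : H)
    (hA : DirectSum.IsInternal 𝒜) (hM : DirectSum.IsInternal ℳ) (hN : DirectSum.IsInternal 𝒩)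
    (hMs : ∀ {g h : G} {r : R} {m : M}, r ∈ 𝒜 g → m ∈ ℳ h → r • m ∈ ℳ (g + h))
    (h𝒩 : IsGradedModule 𝒜 𝒩) (hsmall : IsSmall 𝒜 ℳ) (u : M →ₗ[R] N) :
    ∃ t : Finset G, ∀ g : G, ψ g = h → g ∉ t → ∀ m : M, homComp hM hN u g m = 0 := by
  classical
  let ι : Type := {g : G // ψ g = h}
  let 𝒩' : ι → G → AddSubgroup N := fun i g' => 𝒩 (g' + i.1)
  let Ψ : G → (N →+ ⨁ (_ : ι), N) := fun k =>
    (DirectSum.toAddMonoid (fun j => if hj : ψ (j - k) = h then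
      (DirectSum.of (fun _ : ι => N) ⟨j - k, hj⟩).comp (𝒩 j).subtype else 0)).comp
      (intDec hN).toAddMonoidHom
  have Ψ_apply : ∀ (k : G) (y : N) (i : ι), (Ψ k y) i = intProj hN (i.1 + k) y := by
    intro k y i
    refine intInduction hN (P := fun y => (Ψ k y) i = intProj hN (i.1 + k) y) ?_ ?_ ?_ y
    · beta_reduce
      rw [map_zero, DirectSum.zero_apply, map_zero]
    · intro j y hy
      beta_reduce
      have h1 : Ψ k y = (if hj : ψ (j - k) = h then
          (DirectSum.of (fun _ : ι => N) ⟨j - k, hj⟩).comp (𝒩 j).subtype else 0) ⟨y, hy⟩ := by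
        show (DirectSum.toAddMonoid _) ((intDec hN).toAddMonoidHom y) = _
        have h2 : (intDec hN).toAddMonoidHom y = DirectSum.of (fun g => ↥(𝒩 g)) j ⟨y, hy⟩ :=
          intDec_of_mem hN hy
        rw [h2, DirectSum.toAddMonoid_of]
      rw [h1, intProj_of_mem hN hy]
      by_cases hj : ψ (j - k) = h
      · rw [dif_pos hj]
        by_cases hji : j = i.1 + k
        · have hsub : (⟨j - k, hj⟩ : ι) = i := Subtype.ext (by
            show j - k = i.1
            rw [hji]; abel)
          rw [hsub]
          show (DirectSum.of (fun _ : ι => N) i y) i = _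
          rw [DirectSum.of_eq_same, if_pos hji]
        · have hne : (⟨j - k, hj⟩ : ι) ≠ i := by
            intro hc
            have hc2 := congrArg Subtype.val hc
            dsimp only at hc2
            exact hji (by rw [← hc2, sub_add_cancel])
          show (DirectSum.of (fun _ : ι => N) ⟨j - k, hj⟩ y) i = _
          rw [DirectSum.of_eq_of_ne _ _ _ hne.symm, if_neg hji]
      · rw [dif_neg hj]
        have hji : j ≠ i.1 + k := by
          intro hc
          refine hj ?_
          rw [hc]
          have : i.1 + k - k = i.1 := by abel
          rw [this]
          exact i.2
        show (0 : ⨁ (_ : ι), N) i = _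
        rw [DirectSum.zero_apply, if_neg hji]
    · intro a b ha hb
      beta_reduce
      rw [map_add, DirectSum.add_apply, map_add, ha, hb]
  let F0 : M →+ ⨁ (_ : ι), N :=
    (DirectSum.toAddMonoid (fun k => (Ψ k).comp (u.toAddMonoidHom.comp (ℳ k).subtype))).comp
      (intDec hM).toAddMonoidHom
  have F0_apply : ∀ (m : M) (i : ι), (F0 m) i = homComp hM hN u i.1 m := by
    intro m i
    refine intInduction hM (P := fun m => (F0 m) i = homComp hM hN u i.1 m) ?_ ?_ ?_ m
    · beta_reduce
      rw [map_zero, DirectSum.zero_apply, map_zero]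
    · intro k m hm
      beta_reduce
      have h1 : F0 m = Ψ k (u m) := by
        show (DirectSum.toAddMonoid _) ((intDec hM).toAddMonoidHom m) = _
        have h2 : (intDec hM).toAddMonoidHom m = DirectSum.of (fun g => ↥(ℳ g)) k ⟨m, hm⟩ :=
          intDec_of_mem hM hm
        rw [h2, DirectSum.toAddMonoid_of]
        rfl
      rw [h1, Ψ_apply k (u m) i, homComp_of_mem hM hN u i.1 hm]
    · intro a b ha hb
      beta_reduce
      rw [map_add, DirectSum.add_apply, map_add, ha, hb]
  let F : M →ₗ[R] ⨁ (_ : ι), N :=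
    { toFun := F0, map_add' := map_add F0,
      map_smul' := by
        intro r m
        refine DFinsupp.ext fun i => ?_
        show (F0 (r • m)) i = (r • F0 m) i
        rw [DirectSum.smul_apply, F0_apply, F0_apply,
          homComp_smul hA hM hN (fun {_ _ _ _} => hMs) (fun {_ _ _ _} => h𝒩.1) u i.1 r m] }
  have hFgraded : IsGradedHom ℳ (directSumGrading fun i : ι => 𝒩' i) F := by
    intro g' m hm i
    show (F0 m) i ∈ 𝒩 (g' + i.1)
    rw [F0_apply, homComp_of_mem hM hN u i.1 hm, add_comm g' i.1]
    exact intProj_mem hN (i.1 + g') (u m)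
  obtain ⟨s, hs⟩ := hsmall ι (fun _ => N) 𝒩' (fun i => isGradedModule_shift h𝒩 i.1) F hFgraded
  refine ⟨s.image Subtype.val, ?_⟩
  intro g hg hgt m
  have hnotmem : (⟨g, hg⟩ : ι) ∉ s := fun hmem => hgt (Finset.mem_image_of_mem _ hmem)
  have h0 := hs m ⟨g, hg⟩ hnotmem
  exact (F0_apply m ⟨g, hg⟩).symm.trans h0

end FinsetLemmas

/-- **Statement 16** (Theorem 2.70): the canonical natural monomorphism
`h_ψ^M : (⨁HOM^G_R(M,•))_[ψ] → ⨁HOM^H_{R_[ψ]}(M_[ψ], •_[ψ])` is an isomorphism — i.e. for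
every `G`-graded `R`-module `N` the subgroups `⨆_{g : G} Hom(M, N(g))` and
`⨆_{h : H} Hom(M_[ψ], N_[ψ](h))` of `M →ₗ[R] N` coincide — if and only if `M` is small or
`ker ψ` is finite. -/
theorem gradedHom_coarsening_iso_iff_small_or_ker_finite
    {G H R M : Type} [AddCommGroup G] [AddCommGroup H] [CommRing R]
    [AddCommGroup M] [Module R M]
    (ψ : G →+ H) (hψ : Function.Surjective ψ)
    (𝒜 : G → AddSubgroup R) (h𝒜 : IsGradedRing 𝒜)
    (ℳ : G → AddSubgroup M) (hℳ : IsGradedModule 𝒜 ℳ) :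
    (∀ (N : Type) [AddCommGroup N] [Module R N], ∀ 𝒩 : G → AddSubgroup N,
        IsGradedModule 𝒜 𝒩 →
          (⨆ g : G, gradedHomSubgroup (R := R) ℳ 𝒩 g)
            = ⨆ h : H, gradedHomSubgroup (R := R) (coarsen ψ ℳ) (coarsen ψ 𝒩) h) ↔
      (IsSmall 𝒜 ℳ ∨ Finite ψ.ker) := by
  letI := Classical.decEq G
  constructor
  · -- forward direction
    intro heq
    by_contra hcon
    push_neg at hcon
    obtain ⟨hnotsmall, hnotfin⟩ := hcon
    haveI hkerinf : Infinite ψ.ker := hnotfin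
    rw [IsSmall] at hnotsmall
    push_neg at hnotsmall
    obtain ⟨ι, Nf, inst1, inst2, 𝒩, h𝒩, f, hf, hbig⟩ := hnotsmall
    letI := inst1
    letI := inst2
    classical
    -- the set of indices where f is nonzero is infinite
    have hS : {i : ι | ∃ m, f m i ≠ 0}.Infinite := by
      by_contra hfin
      rw [Set.not_infinite] at hfin
      obtain ⟨m, i, his, hne⟩ := hbig hfin.toFinset
      exact his (hfin.mem_toFinset.mpr ⟨m, hne⟩)
    let emb := Set.Infinite.natEmbedding _ hS
    let e : ℕ → ι := fun n => (emb n).1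
    have he_inj : Function.Injective e := fun a b hab =>
      emb.injective (Subtype.ext hab)
    have he_mem : ∀ n, ∃ m, f m (e n) ≠ 0 := fun n => (emb n).2
    let c : ℕ → ψ.ker := fun n => Infinite.natEmbedding ψ.ker n
    have hc_inj : Function.Injective c := (Infinite.natEmbedding ψ.ker).injective
    -- shifted gradings on the reindexed family
    let Nf' : ℕ → Type := fun n => Nf (e n)
    let 𝒩'' : ∀ n : ℕ, G → AddSubgroup (Nf' n) := fun n g => 𝒩 (e n) (g + (c n : G))
    have h𝒩'' : ∀ n, IsGradedModule 𝒜 (𝒩'' n) := fun n => isGradedModule_shift (h𝒩 (e n)) _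
    let cd : (⨁ i, Nf i) →ₗ[R] ⨁ n, Nf' n :=
      { toFun := DFinsupp.comapDomain e he_inj,
        map_add' := fun a b => DFinsupp.comapDomain_add e he_inj a b,
        map_smul' := fun r a => DFinsupp.comapDomain_smul e he_inj r a }
    let f' : M →ₗ[R] ⨁ n, Nf' n := cd.comp f
    have hf'_apply : ∀ (m : M) (n : ℕ), f' m n = f m (e n) := fun m n => rfl
    -- f' is a coarse-graded morphism of degree 0
    have hf'_mem : f' ∈ gradedHomSubgroup (R := R) (coarsen ψ ℳ)
        (coarsen ψ (directSumGrading 𝒩'')) 0 := by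
      intro h' m hm
      have hle : coarsen ψ ℳ h' ≤ AddSubgroup.comap f'.toAddMonoidHom
          (coarsen ψ (directSumGrading 𝒩'') (0 + h')) := by
        refine iSup₂_le fun g' hg' => ?_
        intro m hm
        show f' m ∈ coarsen ψ (directSumGrading 𝒩'') (0 + h')
        have hdecomp : f' m = ∑ n ∈ (f' m).support, DirectSum.of Nf' n (f' m n) :=
          (DirectSum.sum_support_of _).symm
        rw [hdecomp]
        refine AddSubgroup.sum_mem _ fun n _ => ?_
        have hcomp : f' m n ∈ 𝒩'' n (g' - (c n : G)) := by
          show f' m n ∈ 𝒩 (e n) ((g' - (c n : G)) + (c n : G))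
          rw [sub_add_cancel]
          exact (hf g' m hm) (e n)
        refine (le_iSup₂ (f := fun g (_ : g ∈ ψ ⁻¹' {0 + h'}) => directSumGrading 𝒩'' g)
          (g' - (c n : G)) ?_) ?_
        · show g' - (c n : G) ∈ ψ ⁻¹' {0 + h'}
          rw [Set.mem_preimage, Set.mem_singleton_iff, map_sub]
          have hc0 : ψ ((c n : G)) = 0 := (c n).2
          rw [hc0, Set.mem_singleton_iff.mp hg', sub_zero, zero_add]
        · intro n'
          by_cases hnn : n = n'
          · subst hnn; rw [DirectSum.of_eq_same]; exact hcomp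
          · rw [DirectSum.of_eq_of_ne _ _ _ (Ne.symm hnn)]; exact zero_mem _
      exact hle hm
    -- use the hypothesis to decompose f' into finitely many fine-graded pieces
    have heqN := heq (⨁ n, Nf' n) (directSumGrading 𝒩'')
      (isGradedModule_directSumGrading 𝒩'' h𝒩'')
    have hf'_sup : f' ∈ ⨆ g : G, gradedHomSubgroup (R := R) ℳ (directSumGrading 𝒩'') g := by
      rw [heqN]
      exact AddSubgroup.mem_iSup_of_mem 0 hf'_mem
    obtain ⟨t, w, hw, hfw⟩ := mem_iSup_exists_finset _ hf'_sup
    -- choose an index n with -(c n) not among the finitely many degrees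
    have hfin : {n : ℕ | (-(c n : G)) ∈ (t : Set G)}.Finite := by
      refine Set.Finite.preimage ?_ t.finite_toSet
      intro a _ b _ hab
      exact hc_inj (Subtype.ext (neg_injective hab))
    obtain ⟨n, hn⟩ := hfin.infinite_compl.nonempty
    have hnt : (-(c n : G)) ∉ (t : Set G) := hn
    -- f vanishes at index e n, contradiction
    have hzero : ∀ m : M, f m (e n) = 0 := by
      refine intInduction hℳ.2 (P := fun m => f m (e n) = 0) ?_ ?_ ?_
      · beta_reduce
        rw [map_zero, DirectSum.zero_apply]
      · intro g' m hm
        beta_reduce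
        have hfm : f m (e n) ∈ 𝒩 (e n) g' := (hf g' m hm) (e n)
        have hev : f m (e n) = ∑ g ∈ t, (w g m) n := by
          have h1 : f' m = (∑ g ∈ t, w g) m := LinearMap.congr_fun hfw m
          rw [LinearMap.sum_apply] at h1
          have h2 := congrArg (fun v : ⨁ n, Nf' n => v n) h1
          dsimp only at h2
          rw [DFinsupp.finset_sum_apply] at h2
          exact h2
        have hproj := congrArg (intProj (h𝒩 (e n)).2 g') hev
        rw [map_sum] at hproj
        have hL : intProj (h𝒩 (e n)).2 g' (f m (e n)) = f m (e n) := by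
          rw [intProj_of_mem (h𝒩 (e n)).2 hfm, if_pos rfl]
        have hterms : ∀ g ∈ t, intProj (h𝒩 (e n)).2 g' ((w g m) n) = 0 := by
          intro g hg
          have hwg : (w g m) n ∈ 𝒩 (e n) ((g + g') + (c n : G)) := (hw g g' m hm) n
          rw [intProj_of_mem (h𝒩 (e n)).2 hwg, if_neg]
          intro hcc
          refine hnt ?_
          have hgc : g = -(c n : G) := by
            have : g + (c n : G) = 0 := by
              have := congrArg (fun x => x - g') hcc
              rw [show g + g' + (c n : G) - g' = g + (c n : G) by abel, sub_self] at this
              exact this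
            exact eq_neg_of_add_eq_zero_left this
          rw [← hgc]
          exact hg
        rw [hL, Finset.sum_congr rfl hterms, Finset.sum_const_zero] at hproj
        exact hproj
      · intro a b ha hb
        beta_reduce
        rw [map_add, DirectSum.add_apply, ha, hb, add_zero]
    obtain ⟨m, hm⟩ := he_mem n
    exact hm (hzero m)
  · -- backward direction
    rintro hcase N _ _ 𝒩 h𝒩
    refine le_antisymm (iSup_le fun g => ?_) (iSup_le fun h => ?_)
    · -- fine ≤ coarse
      intro u hu
      refine AddSubgroup.mem_iSup_of_mem (ψ g) ?_
      intro h' m hm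
      have hle : coarsen ψ ℳ h' ≤
          AddSubgroup.comap u.toAddMonoidHom (coarsen ψ 𝒩 (ψ g + h')) := by
        refine iSup₂_le fun g' hg' => ?_
        intro m hm
        show u m ∈ coarsen ψ 𝒩 (ψ g + h')
        refine (le_iSup₂ (f := fun g'' (_ : g'' ∈ ψ ⁻¹' {ψ g + h'}) => 𝒩 g'') (g + g') ?_)
          (hu g' m hm)
        show g + g' ∈ ψ ⁻¹' {ψ g + h'}
        rw [Set.mem_preimage, Set.mem_singleton_iff, map_add,
          Set.mem_singleton_iff.mp hg']
      exact hle hm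
    · -- coarse ≤ fine
      intro u hu
      obtain ⟨t, ht⟩ : ∃ t : Finset G, ∀ g : G, ψ g = h → g ∉ t →
          ∀ m : M, homComp hℳ.2 h𝒩.2 u g m = 0 := by
        rcases hcase with hsmall | hker
        · exact exists_finset_of_small ψ h h𝒜.2.2 hℳ.2 h𝒩.2
            (fun {_ _ _ _} => hℳ.1) h𝒩 hsmall u
        · refine ⟨(preimage_finite ψ hker hψ h).toFinset, ?_⟩
          intro g hg hgt m
          exact absurd ((preimage_finite ψ hker hψ h).mem_toFinset.mpr hg) hgt
      have hsum := homComp_sum ψ hℳ.2 h𝒩.2 u h (fun h' m hm => hu h' m hm) t ht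
      have hueq : u = ∑ g ∈ t,
          homCompL h𝒜.2.2 hℳ.2 h𝒩.2 (fun {_ _ _ _} => hℳ.1) (fun {_ _ _ _} => h𝒩.1) u g := by
        refine LinearMap.ext fun m => ?_
        rw [LinearMap.sum_apply]
        exact hsum m
      rw [hueq]
      exact AddSubgroup.sum_mem _ fun g _ => AddSubgroup.mem_iSup_of_mem g
        (homCompL_mem_gradedHomSubgroup h𝒜.2.2 hℳ.2 h𝒩.2
          (fun {_ _ _ _} => hℳ.1) (fun {_ _ _ _} => h𝒩.1) u g)
end

section
/- Let G and H be additive commutative groups, ψ: G → H a surjective group homomorphism, A a commutative ring, and R the G-graded ring with R_0 = A and R_g = 0 for g ≠ 0 (so that R_[ψ] is the H-graded ring with (R_[ψ])_0 = A and (R_[ψ])_h = 0 for h ≠ 0). Then for every H-graded R_[ψ]-module M, the H-graded R_[ψ]-module (M^[ψ])_[ψ] is isomorphic to the direct sum M^(⊕ker(ψ)) of copies of M indexed by ker(ψ). -/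
/-!
Common vocabulary: internally graded rings and modules, coarsening of gradings,
graded morphisms, and derived notions (injectivity, cogenerators, smallness, ...),
following Rohrer, "Coarsenings, injectives and Hom functors".
-/

open DirectSum

/-- **Statement 19** (Example 1.20 C)): let `R` be the `G`-graded ring with `R_0 = A` and
`R_g = 0` for `g ≠ 0` (encoded by the grading `𝒜` on the ring `A`), so that `R_[ψ]` is the
`H`-graded ring concentrated in degree `0`. For every `H`-graded `R_[ψ]`-module `M` (with
grading `𝒩`; its components are automatically `A`-submodules), the `H`-graded module
`(M^[ψ])_[ψ]` — the refinement `M^[ψ] = ⨁_{g : G} M_{ψ g}` together with its `ψ`-coarsened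
grading — is isomorphic to `M^(⊕ ker ψ)`, the direct sum of copies of `M` indexed by
`ker ψ` with its componentwise grading. -/
theorem refinement_coarsening_eq_directSum_over_kernel
    {G H A : Type} [AddCommGroup G] [AddCommGroup H] [DecidableEq G] [DecidableEq H]
    [CommRing A]
    (ψ : G →+ H) (hψ : Function.Surjective ψ)
    (𝒜 : G → AddSubgroup A) (h𝒜0 : 𝒜 0 = ⊤) (h𝒜ne : ∀ g : G, g ≠ 0 → 𝒜 g = ⊥)
    (M : Type) [AddCommGroup M] [Module A M]
    (𝒩 : H → Submodule A M)
    (hmod : IsGradedModule (coarsen ψ 𝒜) (fun h => (𝒩 h).toAddSubgroup)) :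
    ∃ e : (⨁ g : G, 𝒩 (ψ g)) ≃ₗ[A] (⨁ (_ : ψ.ker), M),
      ∀ h : H,
        AddSubgroup.map e.toLinearMap.toAddMonoidHom
            (coarsen ψ
              (fun g : G =>
                ((DirectSum.lof A G (fun g' : G => 𝒩 (ψ g')) g).range.toAddSubgroup)) h)
          = directSumGrading (fun (_ : ψ.ker) (h' : H) => (𝒩 h').toAddSubgroup) h := by
  
  classical
  obtain ⟨s, hs⟩ : ∃ s : H → G, ∀ h, ψ (s h) = h :=
    ⟨Function.surjInv hψ, fun h => Function.surjInv_eq hψ h⟩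
  have hker : ∀ g : G, g - s (ψ g) ∈ ψ.ker := fun g => by
    simp [AddMonoidHom.mem_ker, map_sub, hs]
  have hks : ∀ (k : ψ.ker) (h : H), ψ ((k : G) + s h) = h := fun k h => by
    rw [map_add, hs, k.2, zero_add]
  -- internal decomposition of M by 𝒩
  have hint : DirectSum.IsInternal 𝒩 := by
    have h2 := hmod.2
    unfold DirectSum.IsInternal at h2 ⊢
    rw [Subsingleton.elim (Classical.decEq H) (inferInstance : DecidableEq H)] at h2
    exact h2
  let dec : (⨁ h : H, 𝒩 h) ≃ₗ[A] M :=
    LinearEquiv.ofBijective (DirectSum.coeLinearMap 𝒩) hint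
  have hdec : ∀ x, dec x = DirectSum.coeLinearMap 𝒩 x := fun _ => rfl
  -- the forward map
  let F : (⨁ g : G, (𝒩 (ψ g) : Type)) →ₗ[A] ⨁ (_ : ψ.ker), M :=
    DirectSum.toModule A G _ (fun g =>
      (DirectSum.lof A ψ.ker (fun _ => M) ⟨g - s (ψ g), hker g⟩) ∘ₗ (𝒩 (ψ g)).subtype)
  have hF : ∀ (g : G) (x : 𝒩 (ψ g)),
      F (DirectSum.lof A G (fun g' => (𝒩 (ψ g') : Type)) g x)
        = DirectSum.lof A ψ.ker (fun _ => M) ⟨g - s (ψ g), hker g⟩ (x : M) :=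
    fun g x => by
      simp only [F, DirectSum.toModule_lof, LinearMap.comp_apply, Submodule.subtype_apply]
  -- for each k in the kernel, the map from the decomposition back into the refinement
  let toG : ψ.ker → ((⨁ h : H, (𝒩 h : Type)) →ₗ[A] ⨁ g : G, (𝒩 (ψ g) : Type)) := fun k =>
    DirectSum.toModule A H _ (fun h =>
      (DirectSum.lof A G (fun g => (𝒩 (ψ g) : Type)) ((k : G) + s h)) ∘ₗ
        (LinearEquiv.ofEq (𝒩 h) (𝒩 (ψ ((k : G) + s h))) (by rw [hks])).toLinearMap)
  have htoG : ∀ (k : ψ.ker) (h : H) (x : 𝒩 h),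
      toG k (DirectSum.lof A H (fun h' => (𝒩 h' : Type)) h x)
        = DirectSum.lof A G (fun g => (𝒩 (ψ g) : Type)) ((k : G) + s h)
            (LinearEquiv.ofEq (𝒩 h) (𝒩 (ψ ((k : G) + s h))) (by rw [hks]) x) :=
    fun k h x => by
      simp only [toG, DirectSum.toModule_lof, LinearMap.comp_apply, LinearEquiv.coe_toLinearMap]
  let Inv : (⨁ (_ : ψ.ker), M) →ₗ[A] ⨁ g : G, (𝒩 (ψ g) : Type) :=
    DirectSum.toModule A ψ.ker _ (fun k => (toG k) ∘ₗ dec.symm.toLinearMap)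
  have hInv : ∀ (k : ψ.ker) (m : M),
      Inv (DirectSum.lof A ψ.ker (fun _ => M) k m) = toG k (dec.symm m) :=
    fun k m => by
      simp only [Inv, DirectSum.toModule_lof, LinearMap.comp_apply, LinearEquiv.coe_toLinearMap]
  -- congruence for lof with equal indices
  have lof_congr : ∀ {g g' : G} (hgg : g = g') (x : 𝒩 (ψ g)),
      DirectSum.lof A G (fun g'' => (𝒩 (ψ g'') : Type)) g x
        = DirectSum.lof A G (fun g'' => (𝒩 (ψ g'') : Type)) g'
            (LinearEquiv.ofEq (𝒩 (ψ g)) (𝒩 (ψ g')) (by rw [hgg]) x) := by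
    intro g g' hgg x
    subst hgg
    rfl
  -- F ∘ toG k
  have hFtoG : ∀ k : ψ.ker, F ∘ₗ toG k
      = (DirectSum.lof A ψ.ker (fun _ => M) k) ∘ₗ DirectSum.coeLinearMap 𝒩 := by
    intro k
    apply DirectSum.linearMap_ext
    intro h
    ext x
    simp only [LinearMap.comp_apply, htoG, hF]
    have h1 : (⟨(k : G) + s h - s (ψ ((k : G) + s h)), hker _⟩ : ψ.ker) = k := by
      apply Subtype.ext
      show (k : G) + s h - s (ψ ((k : G) + s h)) = (k : G)
      rw [hks, add_sub_cancel_right]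
    have h3 : (DirectSum.coeLinearMap 𝒩) (DirectSum.lof A H (fun h' => (𝒩 h' : Type)) h x)
        = (x : M) := DirectSum.coeLinearMap_of 𝒩 h x
    rw [h3]
    have h2 : ((LinearEquiv.ofEq (𝒩 h) (𝒩 (ψ ((k : G) + s h))) (by rw [hks]) x : 𝒩 (ψ ((k : G) + s h))) : M) = (x : M) := rfl
    rw [h2]
    exact DFunLike.congr_fun (congrArg (fun i : ψ.ker => DirectSum.lof A ψ.ker (fun _ => M) i (x : M)) h1) _
  have hFI : F ∘ₗ Inv = LinearMap.id := by
    apply DirectSum.linearMap_ext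
    intro k
    ext m
    simp only [LinearMap.comp_apply, hInv, LinearMap.id_apply]
    have := congrArg (fun (f : _ →ₗ[A] _) => f (dec.symm m)) (hFtoG k)
    simp only [LinearMap.comp_apply] at this
    rw [this, ← hdec, LinearEquiv.apply_symm_apply]
  have hIF : Inv ∘ₗ F = LinearMap.id := by
    apply DirectSum.linearMap_ext
    intro g
    ext x
    simp only [LinearMap.comp_apply, hF, hInv, LinearMap.id_apply]
    have hdx : dec.symm ((x : M)) = DirectSum.lof A H (fun h' => (𝒩 h' : Type)) (ψ g) x := by
      have h3 : (DirectSum.coeLinearMap 𝒩) (DirectSum.lof A H (fun h' => (𝒩 h' : Type)) (ψ g) x)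
          = (x : M) := DirectSum.coeLinearMap_of 𝒩 (ψ g) x
      rw [LinearEquiv.symm_apply_eq, hdec, h3]
    rw [hdx, htoG]
    rw [lof_congr (g := (↑(⟨g - s (ψ g), hker g⟩ : ψ.ker) : G) + s (ψ g)) (g' := g)
      (by simp)]
    congr 1
  let e : (⨁ g : G, (𝒩 (ψ g) : Type)) ≃ₗ[A] ⨁ (_ : ψ.ker), M :=
    LinearEquiv.ofLinear F Inv hFI hIF
  have he : ∀ x, e x = F x := fun _ => rfl
  refine ⟨e, fun h => ?_⟩
  apply le_antisymm
  · -- forward inclusion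
    rw [AddSubgroup.map_le_iff_le_comap]
    apply iSup₂_le
    intro g hg
    rintro _ ⟨x, rfl⟩
    have hgh : ψ g = h := hg
    simp only [AddSubgroup.mem_comap, LinearMap.toAddMonoidHom_coe, LinearEquiv.coe_coe]
    show e (DirectSum.lof A G (fun g' => (𝒩 (ψ g') : Type)) g x)
      ∈ directSumGrading (fun (_ : ψ.ker) (h' : H) => (𝒩 h').toAddSubgroup) h
    rw [he, hF]
    intro k
    by_cases hk : (⟨g - s (ψ g), hker g⟩ : ψ.ker) = k
    · subst hk
      rw [DirectSum.lof_eq_of, DirectSum.of_eq_same]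
      show (x : M) ∈ 𝒩 h
      rw [← hgh]
      exact x.2
    · rw [DirectSum.lof_eq_of, DirectSum.of_eq_of_ne _ _ _ (Ne.symm hk)]
      exact zero_mem _
  · -- reverse inclusion
    intro y hy
    have hy' : ∀ k : ψ.ker, y k ∈ 𝒩 h := hy
    have key : ∀ k : ψ.ker, ∀ m : M, m ∈ 𝒩 h →
        DirectSum.of (fun _ : ψ.ker => M) k m ∈
          AddSubgroup.map e.toLinearMap.toAddMonoidHom
            (coarsen ψ (fun g : G =>
              ((DirectSum.lof A G (fun g' : G => 𝒩 (ψ g')) g).range.toAddSubgroup)) h) := by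
      intro k m hm
      set g' : G := (k : G) + s h with hg'
      have hg'h : ψ g' = h := hks k h
      set x : (𝒩 (ψ g') : Type) := ⟨m, hg'h ▸ hm⟩ with hx
      refine ⟨DirectSum.lof A G (fun g'' => (𝒩 (ψ g'') : Type)) g' x, ?_, ?_⟩
      · refine AddSubgroup.mem_iSup_of_mem g' ?_
        refine AddSubgroup.mem_iSup_of_mem ?_ ?_
        · show g' ∈ ψ ⁻¹' {h}
          simpa using hg'h
        · exact ⟨x, rfl⟩
      · simp only [LinearMap.toAddMonoidHom_coe, LinearEquiv.coe_coe]
        rw [he, hF]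
        have h1 : (⟨g' - s (ψ g'), hker _⟩ : ψ.ker) = k := by
          apply Subtype.ext
          show g' - s (ψ g') = (k : G)
          rw [hg'h, hg', add_sub_cancel_right]
        rw [DirectSum.lof_eq_of]
        exact congrArg (fun i : ψ.ker => DirectSum.of (fun _ : ψ.ker => M) i m) h1
    have hrepr : y = ∑ k ∈ DFinsupp.support y, DirectSum.of (fun _ : ψ.ker => M) k (y k) :=
      (DirectSum.sum_support_of y).symm
    rw [hrepr]
    exact sum_mem (fun k _ => key k (y k) (hy' k))
end
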